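/- arXiv:1603.08948 — 12 statements merged into one kernel-verified Lean document; each statement's English description precedes it below -/
import Mathlib

section
/- Let λ ∈ ℂ with |λ| = 1 and let Ψ^L, Ψ^R : ℤ → ℂ be an eigenvector of the 2-state diagonal quantum walk with one defect with eigenvalue λ, with α = Ψ^L(0), β = Ψ^R(0). Then the measure μ(x) = |Ψ^L(x)|² + |Ψ^R(x)|² satisfies: μ(x) = (1+|b|²)|α|² + |a|²|β|² − 2·Re(conj(a)·b·conj(α)·β) for all x ≥ 1; μ(0) = |α|² + |β|²; and μ(x) = |a|²|α|² + (1+|b|²)|β|² + 2·Re(conj(a)·b·conj(α)·β) for all x ≤ −1. -/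
/-- Theorem 3.1 (stationary measure of the 2-state diagonal QW with one defect):
for an eigenvector with eigenvalue `lam` (|lam| = 1), the associated measure is
constant on each of the regions `x ≥ 1`, `x = 0`, `x ≤ -1`, with the stated values. -/
theorem two_state_diagonal_defect_stationary_measure
    (σp σm : ℝ) (Δp Δm Δ0 a b c d : ℂ)
    (hΔp : ‖Δp‖ = 1) (hΔm : ‖Δm‖ = 1) (hΔ0 : ‖Δ0‖ = 1)
    (hab : ‖a‖ ^ 2 + ‖b‖ ^ 2 = 1)
    (hc : c = -Δ0 * (starRingEnd ℂ) b) (hd : d = Δ0 * (starRingEnd ℂ) a)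
    (lam : ℂ) (hlam : ‖lam‖ = 1)
    (ΨL ΨR : ℤ → ℂ)
    (hL1 : ∀ x : ℤ, 0 ≤ x →
      lam * ΨL x = Complex.exp (Complex.I * (σp : ℂ)) * ΨL (x + 1))
    (hL2 : ∀ x : ℤ, x ≤ -2 →
      lam * ΨL x = Complex.exp (Complex.I * (σm : ℂ)) * ΨL (x + 1))
    (hL3 : lam * ΨL (-1) = a * ΨL 0 + b * ΨR 0)
    (hR1 : ∀ x : ℤ, 2 ≤ x →
      lam * ΨR x = Δp * Complex.exp (-(Complex.I * (σp : ℂ))) * ΨR (x - 1))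
    (hR2 : ∀ x : ℤ, x ≤ 0 →
      lam * ΨR x = Δm * Complex.exp (-(Complex.I * (σm : ℂ))) * ΨR (x - 1))
    (hR3 : lam * ΨR 1 = c * ΨL 0 + d * ΨR 0)
    (α β : ℂ) (hα : α = ΨL 0) (hβ : β = ΨR 0)
    (μ : ℤ → ℝ)
    (hμ : ∀ x : ℤ, μ x = ‖ΨL x‖ ^ 2 + ‖ΨR x‖ ^ 2) :
    (∀ x : ℤ, 1 ≤ x →
      μ x = (1 + ‖b‖ ^ 2) * ‖α‖ ^ 2
              + ‖a‖ ^ 2 * ‖β‖ ^ 2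
              - 2 * ((starRingEnd ℂ) a * b * (starRingEnd ℂ) α * β).re) ∧
    μ 0 = ‖α‖ ^ 2 + ‖β‖ ^ 2 ∧
    (∀ x : ℤ, x ≤ -1 →
      μ x = ‖a‖ ^ 2 * ‖α‖ ^ 2
              + (1 + ‖b‖ ^ 2) * ‖β‖ ^ 2
              + 2 * ((starRingEnd ℂ) a * b * (starRingEnd ℂ) α * β).re) := by

  have habs : ∀ (k z w : ℂ), ‖k‖ = 1 → lam * z = k * w →
      ‖z‖ = ‖w‖ := by
    intro k z w hk h
    have := congrArg norm h
    simpa [norm_mul, hlam, hk] using this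
  have hexp : ∀ σ : ℝ, ‖Complex.exp (Complex.I * (σ:ℂ))‖ = 1 := by
    intro σ
    rw [Complex.norm_exp]
    simp [Complex.mul_re]
  have hexp' : ∀ σ : ℝ, ‖Complex.exp (-(Complex.I * (σ:ℂ)))‖ = 1 := by
    intro σ
    rw [Complex.norm_exp]
    simp [Complex.mul_re]
  -- |ΨL x| = |α| for x ≥ 0
  have hLpos : ∀ x : ℤ, 0 ≤ x → ‖ΨL x‖ = ‖α‖ := by
    refine Int.le_induction ?_ ?_
    · rw [hα]
    · intro n hn ih
      rw [← habs _ _ _ (hexp σp) (hL1 n hn), ih]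
  -- |ΨR x| = |ΨR 1| for x ≥ 1
  have hRpos : ∀ x : ℤ, 1 ≤ x → ‖ΨR x‖ = ‖ΨR 1‖ := by
    refine Int.le_induction rfl ?_
    intro n hn ih
    have h := hR1 (n+1) (by omega)
    rw [habs _ _ _ (by rw [norm_mul, hΔp, hexp' σp, one_mul]) h]
    simpa using ih
  -- |ΨR x| = |β| for x ≤ 0
  have hRneg : ∀ x : ℤ, x ≤ 0 → ‖ΨR x‖ = ‖β‖ := by
    refine Int.le_induction_down ?_ ?_
    · rw [hβ]
    · intro n hn ih
      rw [← habs _ _ _ (by rw [norm_mul, hΔm, hexp' σm, one_mul]) (hR2 n hn), ih]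
  -- |ΨL x| = |ΨL (-1)| for x ≤ -1
  have hLneg : ∀ x : ℤ, x ≤ -1 → ‖ΨL x‖ = ‖ΨL (-1)‖ := by
    refine Int.le_induction_down rfl ?_
    intro n hn ih
    have h := hL2 (n-1) (by omega)
    rw [habs _ _ _ (hexp σm) h]
    simpa using ih
  have hΔ0' : Δ0 * (starRingEnd ℂ) Δ0 = 1 := by
    rw [Complex.mul_conj]
    norm_cast
    rw [Complex.normSq_eq_norm_sq, hΔ0, one_pow]
  have hnsq : ∀ z : ℂ, ‖z‖ ^ 2 = Complex.normSq z := fun z =>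
    (Complex.sq_norm z).symm ▸ (Complex.sq_norm z)
  -- |ΨR 1|²
  have hR1sq : ‖ΨR 1‖ ^ 2 = ‖b‖ ^ 2 * ‖α‖ ^ 2
      + ‖a‖ ^ 2 * ‖β‖ ^ 2
      - 2 * ((starRingEnd ℂ) a * b * (starRingEnd ℂ) α * β).re := by
    have h1 : ‖ΨR 1‖ = ‖c * α + d * β‖ := by
      apply habs 1 _ _ (by simp)
      rw [one_mul, hR3, hα, hβ]
    rw [h1, Complex.sq_norm (c * α + d * β), Complex.normSq_add]
    have e1 : Complex.normSq (c * α) = ‖b‖ ^ 2 * ‖α‖ ^ 2 := by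
      rw [hc, Complex.normSq_mul, Complex.normSq_mul, Complex.normSq_neg,
        Complex.normSq_conj, ← Complex.sq_norm, ← Complex.sq_norm, ← Complex.sq_norm, hΔ0]
      ring
    have e2 : Complex.normSq (d * β) = ‖a‖ ^ 2 * ‖β‖ ^ 2 := by
      rw [hd, Complex.normSq_mul, Complex.normSq_mul,
        Complex.normSq_conj, ← Complex.sq_norm, ← Complex.sq_norm, ← Complex.sq_norm, hΔ0]
      ring
    have e3 : (c * α * (starRingEnd ℂ) (d * β)).re
        = -((starRingEnd ℂ) a * b * (starRingEnd ℂ) α * β).re := by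
      have : c * α * (starRingEnd ℂ) (d * β)
          = -(Δ0 * (starRingEnd ℂ) Δ0) * (a * (starRingEnd ℂ) b * α * (starRingEnd ℂ) β) := by
        rw [hc, hd, map_mul, map_mul, Complex.conj_conj]
        ring
      rw [this, hΔ0']
      have : -(1:ℂ) * (a * (starRingEnd ℂ) b * α * (starRingEnd ℂ) β)
          = -((starRingEnd ℂ) ((starRingEnd ℂ) a * b * (starRingEnd ℂ) α * β)) := by
        simp only [map_mul, Complex.conj_conj]
        ring
      rw [this, Complex.neg_re, Complex.conj_re]
    rw [e1, e2, e3]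
    ring
  -- |ΨL (-1)|²
  have hLm1sq : ‖ΨL (-1)‖ ^ 2 = ‖a‖ ^ 2 * ‖α‖ ^ 2
      + ‖b‖ ^ 2 * ‖β‖ ^ 2
      + 2 * ((starRingEnd ℂ) a * b * (starRingEnd ℂ) α * β).re := by
    have h1 : ‖ΨL (-1)‖ = ‖a * α + b * β‖ := by
      apply habs 1 _ _ (by simp)
      rw [one_mul, hL3, hα, hβ]
    rw [h1, Complex.sq_norm (a * α + b * β), Complex.normSq_add]
    have e1 : Complex.normSq (a * α) = ‖a‖ ^ 2 * ‖α‖ ^ 2 := by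
      rw [Complex.normSq_mul, ← Complex.sq_norm, ← Complex.sq_norm]
    have e2 : Complex.normSq (b * β) = ‖b‖ ^ 2 * ‖β‖ ^ 2 := by
      rw [Complex.normSq_mul, ← Complex.sq_norm, ← Complex.sq_norm]
    have e3 : (a * α * (starRingEnd ℂ) (b * β)).re
        = ((starRingEnd ℂ) a * b * (starRingEnd ℂ) α * β).re := by
      have : a * α * (starRingEnd ℂ) (b * β)
          = (starRingEnd ℂ) ((starRingEnd ℂ) a * b * (starRingEnd ℂ) α * β) := by
        simp only [map_mul, Complex.conj_conj]
        ring
      rw [this, Complex.conj_re]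
    rw [e1, e2, e3]
  refine ⟨?_, ?_, ?_⟩
  · intro x hx
    rw [hμ x, hLpos x (by omega), hRpos x hx, hR1sq]
    ring
  · rw [hμ 0, hα, hβ]
  · intro x hx
    rw [hμ x, hLneg x hx, hRneg x (by omega), hLm1sq]
    ring
end

section
/- Let λ ∈ ℂ with λ ≠ 0 and let Ψ^L, Ψ^R : ℤ → ℂ be an eigenvector of the 2-state diagonal quantum walk with one defect with eigenvalue λ, with α = Ψ^L(0), β = Ψ^R(0). Then the amplitudes are given explicitly by: for x ≥ 1, Ψ^L(x) = (λ·e^{−iσ₊})^x · α and Ψ^R(x) = λ⁻¹(cα + dβ)·(λ⁻¹Δ⁺e^{−iσ₊})^{x−1}; and for x ≤ −1, Ψ^L(x) = λ⁻¹(aα + bβ)·(λ⁻¹e^{iσ₋})^{−x−1} and Ψ^R(x) = (λ·(Δ⁻)⁻¹·e^{iσ₋})^{−x} · β. -/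
/-- Explicit form of the stationary amplitudes of the 2-state diagonal QW with one defect. -/
theorem two_state_diagonal_defect_amplitudes
    (σp σm : ℝ) (Δp Δm Δ0 a b c d : ℂ)
    (hΔp : ‖Δp‖ = 1) (hΔm : ‖Δm‖ = 1) (hΔ0 : ‖Δ0‖ = 1)
    (hab : ‖a‖ ^ 2 + ‖b‖ ^ 2 = 1)
    (hc : c = -Δ0 * (starRingEnd ℂ) b) (hd : d = Δ0 * (starRingEnd ℂ) a)
    (lam : ℂ) (hlam : lam ≠ 0)
    (ΨL ΨR : ℤ → ℂ)
    (hL1 : ∀ x : ℤ, 0 ≤ x →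
      lam * ΨL x = Complex.exp (Complex.I * (σp : ℂ)) * ΨL (x + 1))
    (hL2 : ∀ x : ℤ, x ≤ -2 →
      lam * ΨL x = Complex.exp (Complex.I * (σm : ℂ)) * ΨL (x + 1))
    (hL3 : lam * ΨL (-1) = a * ΨL 0 + b * ΨR 0)
    (hR1 : ∀ x : ℤ, 2 ≤ x →
      lam * ΨR x = Δp * Complex.exp (-(Complex.I * (σp : ℂ))) * ΨR (x - 1))
    (hR2 : ∀ x : ℤ, x ≤ 0 →
      lam * ΨR x = Δm * Complex.exp (-(Complex.I * (σm : ℂ))) * ΨR (x - 1))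
    (hR3 : lam * ΨR 1 = c * ΨL 0 + d * ΨR 0)
    (α β : ℂ) (hα : α = ΨL 0) (hβ : β = ΨR 0) :
    (∀ x : ℤ, 1 ≤ x →
      ΨL x = (lam * Complex.exp (-(Complex.I * (σp : ℂ)))) ^ x * α ∧
      ΨR x = lam⁻¹ * (c * α + d * β)
              * (lam⁻¹ * Δp * Complex.exp (-(Complex.I * (σp : ℂ)))) ^ (x - 1)) ∧
    (∀ x : ℤ, x ≤ -1 →
      ΨL x = lam⁻¹ * (a * α + b * β)
              * (lam⁻¹ * Complex.exp (Complex.I * (σm : ℂ))) ^ (-x - 1) ∧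
      ΨR x = (lam * Δm⁻¹ * Complex.exp (Complex.I * (σm : ℂ))) ^ (-x) * β) := by
  have hΔp0 : Δp ≠ 0 := by
    intro h; rw [h] at hΔp; simp at hΔp
  have hΔm0 : Δm ≠ 0 := by
    intro h; rw [h] at hΔm; simp at hΔm
  set Ep : ℂ := Complex.exp (-(Complex.I * (σp : ℂ))) with hEp
  set Em : ℂ := Complex.exp (Complex.I * (σm : ℂ)) with hEm
  have hEp0 : Ep ≠ 0 := Complex.exp_ne_zero _
  have hEm0 : Em ≠ 0 := Complex.exp_ne_zero _
  have hEpinv : Complex.exp (Complex.I * (σp : ℂ)) = Ep⁻¹ := by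
    rw [hEp, Complex.exp_neg, inv_inv]
  have hEminv : Complex.exp (-(Complex.I * (σm : ℂ))) = Em⁻¹ := by
    rw [hEm, Complex.exp_neg]
  simp only [hEpinv, hEminv] at hL1 hR2
  -- Claim A
  have A : ∀ x : ℤ, 1 ≤ x → ΨL x = (lam * Ep) ^ x * α := by
    intro x hx
    refine Int.le_induction (motive := fun x _ => ΨL x = (lam * Ep) ^ x * α) ?_ ?_ x hx
    · show ΨL 1 = (lam * Ep) ^ (1 : ℤ) * α
      have h := hL1 0 le_rfl
      have key : ΨL 1 = lam * Ep * ΨL 0 := by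
        simp only [zero_add] at h
        field_simp at h; linear_combination -h
      rw [zpow_one, key, hα]
    · intro n hn ih
      have h := hL1 n (by omega)
      have key : ΨL (n + 1) = lam * Ep * ΨL n := by
        field_simp at h; linear_combination -h
      rw [key, ih, zpow_add_one₀ (mul_ne_zero hlam hEp0)]
      ring
  -- Claim B
  have B : ∀ x : ℤ, 1 ≤ x →
      ΨR x = lam⁻¹ * (c * α + d * β) * (lam⁻¹ * Δp * Ep) ^ (x - 1) := by
    intro x hx
    refine Int.le_induction
      (motive := fun x _ => ΨR x = lam⁻¹ * (c * α + d * β) * (lam⁻¹ * Δp * Ep) ^ (x - 1)) ?_ ?_ x hx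
    · rw [← hα, ← hβ] at hR3
      norm_num
      field_simp
      linear_combination hR3
    · intro n hn ih
      have h := hR1 (n + 1) (by omega)
      simp only [add_sub_cancel_right] at h
      have key : ΨR (n + 1) = lam⁻¹ * Δp * Ep * ΨR n := by
        field_simp at h ⊢; linear_combination h
      have e : (n : ℤ) + 1 - 1 = (n - 1) + 1 := by ring
      rw [key, ih, e, zpow_add_one₀
        (mul_ne_zero (mul_ne_zero (inv_ne_zero hlam) hΔp0) hEp0)]
      ring
  -- Claim C
  have C : ∀ x : ℤ, x ≤ -1 →
      ΨL x = lam⁻¹ * (a * α + b * β) * (lam⁻¹ * Em) ^ (-x - 1) := by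
    intro x hx
    refine Int.le_induction_down
      (motive := fun x _ => ΨL x = lam⁻¹ * (a * α + b * β) * (lam⁻¹ * Em) ^ (-x - 1)) ?_ ?_ x hx
    · rw [← hα, ← hβ] at hL3
      norm_num
      field_simp
      linear_combination hL3
    · intro n hn ih
      have h := hL2 (n - 1) (by omega)
      simp only [sub_add_cancel] at h
      have key : ΨL (n - 1) = lam⁻¹ * Em * ΨL n := by
        field_simp at h ⊢; linear_combination h
      have e : -(n - 1) - 1 = (-n - 1) + 1 := by ring
      rw [key, ih, e, zpow_add_one₀ (mul_ne_zero (inv_ne_zero hlam) hEm0)]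
      ring
  -- Claim D
  have D : ∀ x : ℤ, x ≤ -1 → ΨR x = (lam * Δm⁻¹ * Em) ^ (-x) * β := by
    intro x hx
    refine Int.le_induction_down
      (motive := fun x _ => ΨR x = (lam * Δm⁻¹ * Em) ^ (-x) * β) ?_ ?_ x hx
    · show ΨR (-1) = (lam * Δm⁻¹ * Em) ^ (-(-1) : ℤ) * β
      have h := hR2 0 le_rfl
      norm_num at h
      have key : ΨR (-1) = lam * Δm⁻¹ * Em * ΨR 0 := by
        field_simp at h ⊢; linear_combination -h
      norm_num [zpow_one, key, hβ]
    · intro n hn ih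
      have h := hR2 n (by omega)
      have key : ΨR (n - 1) = lam * Δm⁻¹ * Em * ΨR n := by
        field_simp at h ⊢; linear_combination -h
      have e : -(n - 1) = (-n) + 1 := by ring
      rw [key, ih, e, zpow_add_one₀
        (mul_ne_zero (mul_ne_zero hlam (inv_ne_zero hΔm0)) hEm0)]
      ring
  exact ⟨fun x hx => ⟨A x hx, B x hx⟩, fun x hx => ⟨C x hx, D x hx⟩⟩
end

section
/- Let λ ∈ ℂ with λ ≠ 0 and let α, β ∈ ℂ be arbitrary. Define Ψ^L, Ψ^R : ℤ → ℂ by Ψ^L(0) = α, Ψ^R(0) = β, and for x ≥ 1: Ψ^L(x) = (λ·e^{−iσ₊})^x · α, Ψ^R(x) = λ⁻¹(cα + dβ)·(λ⁻¹Δ⁺e^{−iσ₊})^{x−1}; for x ≤ −1: Ψ^L(x) = λ⁻¹(aα + bβ)·(λ⁻¹e^{iσ₋})^{−x−1}, Ψ^R(x) = (λ·(Δ⁻)⁻¹·e^{iσ₋})^{−x} · β. Then (Ψ^L, Ψ^R) is an eigenvector of the 2-state diagonal quantum walk with one defect with eigenvalue λ. -/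
/-- Conversely, the explicit formulas define an eigenvector of the 2-state diagonal QW with one defect. -/
theorem two_state_diagonal_defect_amplitudes_are_eigenvector
    (σp σm : ℝ) (Δp Δm Δ0 a b c d : ℂ)
    (hΔp : ‖Δp‖ = 1) (hΔm : ‖Δm‖ = 1) (hΔ0 : ‖Δ0‖ = 1)
    (hab : ‖a‖ ^ 2 + ‖b‖ ^ 2 = 1)
    (hc : c = -Δ0 * (starRingEnd ℂ) b) (hd : d = Δ0 * (starRingEnd ℂ) a)
    (lam : ℂ) (hlam : lam ≠ 0)
    (α β : ℂ) (ΨL ΨR : ℤ → ℂ)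
    (hΨL0 : ΨL 0 = α) (hΨR0 : ΨR 0 = β)
    (hΨLp : ∀ x : ℤ, 1 ≤ x →
      ΨL x = (lam * Complex.exp (-(Complex.I * (σp : ℂ)))) ^ x * α)
    (hΨRp : ∀ x : ℤ, 1 ≤ x →
      ΨR x = lam⁻¹ * (c * α + d * β)
              * (lam⁻¹ * Δp * Complex.exp (-(Complex.I * (σp : ℂ)))) ^ (x - 1))
    (hΨLm : ∀ x : ℤ, x ≤ -1 →
      ΨL x = lam⁻¹ * (a * α + b * β)
              * (lam⁻¹ * Complex.exp (Complex.I * (σm : ℂ))) ^ (-x - 1))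
    (hΨRm : ∀ x : ℤ, x ≤ -1 →
      ΨR x = (lam * Δm⁻¹ * Complex.exp (Complex.I * (σm : ℂ))) ^ (-x) * β) :
    (∀ x : ℤ, 0 ≤ x →
      lam * ΨL x = Complex.exp (Complex.I * (σp : ℂ)) * ΨL (x + 1)) ∧
    (∀ x : ℤ, x ≤ -2 →
      lam * ΨL x = Complex.exp (Complex.I * (σm : ℂ)) * ΨL (x + 1)) ∧
    (lam * ΨL (-1) = a * ΨL 0 + b * ΨR 0) ∧
    (∀ x : ℤ, 2 ≤ x →
      lam * ΨR x = Δp * Complex.exp (-(Complex.I * (σp : ℂ))) * ΨR (x - 1)) ∧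
    (∀ x : ℤ, x ≤ 0 →
      lam * ΨR x = Δm * Complex.exp (-(Complex.I * (σm : ℂ))) * ΨR (x - 1)) ∧
    (lam * ΨR 1 = c * ΨL 0 + d * ΨR 0) := by
  have hΔp0 : Δp ≠ 0 := by intro h; simp [h] at hΔp
  have hΔm0 : Δm ≠ 0 := by intro h; simp [h] at hΔm
  have hEp : Complex.exp (Complex.I * (σp : ℂ)) * Complex.exp (-(Complex.I * (σp : ℂ))) = 1 := by
    rw [← Complex.exp_add, add_neg_cancel, Complex.exp_zero]
  have hEm : Complex.exp (Complex.I * (σm : ℂ)) * Complex.exp (-(Complex.I * (σm : ℂ))) = 1 := by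
    rw [← Complex.exp_add, add_neg_cancel, Complex.exp_zero]
  have hep0 : Complex.exp (-(Complex.I * (σp : ℂ))) ≠ 0 := Complex.exp_ne_zero _
  have hem0 : Complex.exp (Complex.I * (σm : ℂ)) ≠ 0 := Complex.exp_ne_zero _
  have hli : lam * lam⁻¹ = 1 := mul_inv_cancel₀ hlam
  have hΔmi : Δm * Δm⁻¹ = 1 := mul_inv_cancel₀ hΔm0
  refine ⟨?_, ?_, ?_, ?_, ?_, ?_⟩
  · intro x hx
    by_cases h1 : 1 ≤ x
    · rw [hΨLp x h1, hΨLp (x + 1) (by omega), zpow_add₀ (mul_ne_zero hlam hep0), zpow_one]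
      set P := (lam * Complex.exp (-(Complex.I * (σp : ℂ)))) ^ x
      linear_combination (-(P * α * lam)) * hEp
    · have hx0 : x = 0 := by omega
      subst hx0
      rw [hΨL0, hΨLp (0 + 1) (by norm_num)]
      simp only [show (0 : ℤ) + 1 = 1 by norm_num, zpow_one]
      linear_combination (-(α * lam)) * hEp
  · intro x hx
    rw [hΨLm x (by omega), hΨLm (x + 1) (by omega),
      show -x - 1 = (-(x + 1) - 1) + 1 by ring,
      zpow_add₀ (mul_ne_zero (inv_ne_zero hlam) hem0), zpow_one]
    set P := (lam⁻¹ * Complex.exp (Complex.I * (σm : ℂ))) ^ (-(x + 1) - 1)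
    linear_combination (lam⁻¹ * Complex.exp (Complex.I * (σm : ℂ)) * (a * α + b * β) * P) * hli
  · rw [hΨLm (-1) le_rfl, hΨL0, hΨR0]
    simp only [show -(-1 : ℤ) - 1 = 0 by norm_num, zpow_zero, mul_one]
    linear_combination (a * α + b * β) * hli
  · intro x hx
    rw [hΨRp x (by omega), hΨRp (x - 1) (by omega),
      show x - 1 = (x - 1 - 1) + 1 by ring,
      zpow_add₀ (mul_ne_zero (mul_ne_zero (inv_ne_zero hlam) hΔp0) hep0), zpow_one,
      show x - 1 - 1 + 1 - 1 = x - 1 - 1 by ring]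
    set P := (lam⁻¹ * Δp * Complex.exp (-(Complex.I * (σp : ℂ)))) ^ (x - 1 - 1)
    linear_combination
      (lam⁻¹ * Δp * Complex.exp (-(Complex.I * (σp : ℂ))) * (c * α + d * β) * P) * hli
  · intro x hx
    by_cases h1 : x ≤ -1
    · rw [hΨRm x h1, hΨRm (x - 1) (by omega),
        show -(x - 1) = -x + 1 by ring,
        zpow_add₀ (mul_ne_zero (mul_ne_zero hlam (inv_ne_zero hΔm0)) hem0), zpow_one]
      set P := (lam * Δm⁻¹ * Complex.exp (Complex.I * (σm : ℂ))) ^ (-x)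
      linear_combination
        (-(lam * P * β * Complex.exp (-(Complex.I * (σm : ℂ)))
            * Complex.exp (Complex.I * (σm : ℂ)))) * hΔmi + (-(lam * P * β)) * hEm
    · have hx0 : x = 0 := by omega
      subst hx0
      rw [hΨR0, hΨRm (0 - 1) (by norm_num)]
      simp only [show -((0 : ℤ) - 1) = 1 by norm_num, zpow_one]
      linear_combination
        (-(lam * β * Complex.exp (-(Complex.I * (σm : ℂ)))
            * Complex.exp (Complex.I * (σm : ℂ)))) * hΔmi + (-(lam * β)) * hEm
  · rw [hΨRp 1 le_rfl, hΨL0, hΨR0]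
    simp only [show (1 : ℤ) - 1 = 0 by norm_num, zpow_zero, mul_one]
    linear_combination (c * α + d * β) * hli
end

section
/- Let λ ∈ ℂ with |λ| = 1 and let Ψ^L, Ψ^R : ℤ → ℂ be an eigenvector of the 2-state diagonal quantum walk with one defect with eigenvalue λ. If b = 0 (i.e., the defect coin is itself diagonal), then the measure μ(x) = |Ψ^L(x)|² + |Ψ^R(x)|² is uniform: μ(x) = |Ψ^L(0)|² + |Ψ^R(0)|² for all x ∈ ℤ. -/
/-- If the defect coin is itself diagonal (b = 0), the stationary measure is uniform. -/
theorem two_state_diagonal_defect_uniform_of_diagonal_defect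
    (σp σm : ℝ) (Δp Δm Δ0 a b c d : ℂ)
    (hΔp : ‖Δp‖ = 1) (hΔm : ‖Δm‖ = 1) (hΔ0 : ‖Δ0‖ = 1)
    (hab : ‖a‖ ^ 2 + ‖b‖ ^ 2 = 1)
    (hc : c = -Δ0 * (starRingEnd ℂ) b) (hd : d = Δ0 * (starRingEnd ℂ) a)
    (hb : b = 0)
    (lam : ℂ) (hlam : ‖lam‖ = 1)
    (ΨL ΨR : ℤ → ℂ)
    (hL1 : ∀ x : ℤ, 0 ≤ x →
      lam * ΨL x = Complex.exp (Complex.I * (σp : ℂ)) * ΨL (x + 1))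
    (hL2 : ∀ x : ℤ, x ≤ -2 →
      lam * ΨL x = Complex.exp (Complex.I * (σm : ℂ)) * ΨL (x + 1))
    (hL3 : lam * ΨL (-1) = a * ΨL 0 + b * ΨR 0)
    (hR1 : ∀ x : ℤ, 2 ≤ x →
      lam * ΨR x = Δp * Complex.exp (-(Complex.I * (σp : ℂ))) * ΨR (x - 1))
    (hR2 : ∀ x : ℤ, x ≤ 0 →
      lam * ΨR x = Δm * Complex.exp (-(Complex.I * (σm : ℂ))) * ΨR (x - 1))
    (hR3 : lam * ΨR 1 = c * ΨL 0 + d * ΨR 0)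
    (μ : ℤ → ℝ)
    (hμ : ∀ x : ℤ, μ x = ‖ΨL x‖ ^ 2 + ‖ΨR x‖ ^ 2) :
    ∀ x : ℤ, μ x = ‖ΨL 0‖ ^ 2 + ‖ΨR 0‖ ^ 2 := by
  have ha : ‖a‖ = 1 := by
    have : ‖a‖ ^ 2 = 1 := by simpa [hb] using hab
    nlinarith [norm_nonneg a]
  have hd' : ‖d‖ = 1 := by
    rw [hd]; simp [norm_mul, hΔ0, ha]
  have hep : ‖Complex.exp (Complex.I * (σp : ℂ))‖ = 1 := by
    simp [Complex.norm_exp]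
  have hem : ‖Complex.exp (Complex.I * (σm : ℂ))‖ = 1 := by
    simp [Complex.norm_exp]
  have hepn : ‖Complex.exp (-(Complex.I * (σp : ℂ)))‖ = 1 := by
    simp [Complex.norm_exp]
  have hemn : ‖Complex.exp (-(Complex.I * (σm : ℂ)))‖ = 1 := by
    simp [Complex.norm_exp]
  -- |ΨL| constant
  have keyL : ∀ x : ℤ, ‖ΨL x‖ = ‖ΨL 0‖ := by
    intro x
    induction x using Int.induction_on with
    | zero => rfl
    | succ n ih =>
        have := congrArg norm (hL1 n (by exact_mod_cast Nat.zero_le n))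
        rw [norm_mul, norm_mul, hlam, hep, one_mul, one_mul] at this
        rw [← this, ih]
    | pred n ih =>
        rcases Nat.eq_zero_or_pos n with h0 | hpos
        · subst h0
          have := congrArg norm hL3
          rw [hb, zero_mul, add_zero, norm_mul, norm_mul, hlam, ha, one_mul, one_mul] at this
          simpa using this
        · have hle : (-(n : ℤ) - 1) ≤ -2 := by omega
          have := congrArg norm (hL2 (-(n : ℤ) - 1) hle)
          rw [norm_mul, norm_mul, hlam, hem, one_mul, one_mul] at this
          have h1 : (-(n : ℤ) - 1 + 1) = -(n : ℤ) := by ring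
          rw [h1] at this
          rw [this, ih]
  have keyR : ∀ x : ℤ, ‖ΨR x‖ = ‖ΨR 0‖ := by
    intro x
    induction x using Int.induction_on with
    | zero => rfl
    | succ n ih =>
        rcases Nat.eq_zero_or_pos n with h0 | hpos
        · subst h0
          have := congrArg norm hR3
          rw [hc, hb, map_zero, mul_zero, zero_mul, zero_add, norm_mul, norm_mul,
            hlam, hd', one_mul, one_mul] at this
          simpa using this
        · have hge : (2 : ℤ) ≤ (n : ℤ) + 1 := by omega
          have := congrArg norm (hR1 ((n : ℤ) + 1) hge)
          rw [norm_mul, norm_mul, norm_mul, hlam, hΔp, hepn, one_mul, one_mul, one_mul] at this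
          have h1 : ((n : ℤ) + 1 - 1) = (n : ℤ) := by ring
          rw [h1] at this
          rw [this, ih]
    | pred n ih =>
        have hle : (-(n : ℤ)) ≤ 0 := by omega
        have := congrArg norm (hR2 (-(n : ℤ)) hle)
        rw [norm_mul, norm_mul, norm_mul, hlam, hΔm, hemn, one_mul, one_mul, one_mul] at this
        have h1 : (-(n : ℤ) - 1) = (-(n : ℤ) - 1) := rfl
        have h2 : (-(n : ℤ) + -1) = (-(n : ℤ) - 1) := by ring
        rw [← this, ih]
  intro x
  rw [hμ x, keyL x, keyR x]
end

section
/- Let λ ∈ ℂ with |λ| = 1 and let Ψ^L, Ψ^R : ℤ → ℂ be an eigenvector of the 2-state diagonal quantum walk with one defect with eigenvalue λ, with α = Ψ^L(0), β = Ψ^R(0). If |b|²·(|α|² − |β|²) − 2·Re(conj(a)·b·conj(α)·β) = 0, then the measure μ(x) = |Ψ^L(x)|² + |Ψ^R(x)|² is uniform: μ(x) = |α|² + |β|² for all x ∈ ℤ. -/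
private lemma abs_transfer {lam c u v : ℂ} (hl : ‖lam‖ = 1)
    (hc : ‖c‖ = 1) (h : lam * u = c * v) :
    ‖u‖ = ‖v‖ := by
  have h2 := congrArg (‖·‖) h
  simpa [map_mul, hl, hc] using h2
/-- If |b|²(|α|² − |β|²) − 2 Re(conj(a) b conj(α) β) = 0, the stationary measure is uniform. -/
theorem two_state_diagonal_defect_uniform_condition
    (σp σm : ℝ) (Δp Δm Δ0 a b c d : ℂ)
    (hΔp : ‖Δp‖ = 1) (hΔm : ‖Δm‖ = 1) (hΔ0 : ‖Δ0‖ = 1)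
    (hab : ‖a‖ ^ 2 + ‖b‖ ^ 2 = 1)
    (hc : c = -Δ0 * (starRingEnd ℂ) b) (hd : d = Δ0 * (starRingEnd ℂ) a)
    (lam : ℂ) (hlam : ‖lam‖ = 1)
    (ΨL ΨR : ℤ → ℂ)
    (hL1 : ∀ x : ℤ, 0 ≤ x →
      lam * ΨL x = Complex.exp (Complex.I * (σp : ℂ)) * ΨL (x + 1))
    (hL2 : ∀ x : ℤ, x ≤ -2 →
      lam * ΨL x = Complex.exp (Complex.I * (σm : ℂ)) * ΨL (x + 1))
    (hL3 : lam * ΨL (-1) = a * ΨL 0 + b * ΨR 0)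
    (hR1 : ∀ x : ℤ, 2 ≤ x →
      lam * ΨR x = Δp * Complex.exp (-(Complex.I * (σp : ℂ))) * ΨR (x - 1))
    (hR2 : ∀ x : ℤ, x ≤ 0 →
      lam * ΨR x = Δm * Complex.exp (-(Complex.I * (σm : ℂ))) * ΨR (x - 1))
    (hR3 : lam * ΨR 1 = c * ΨL 0 + d * ΨR 0)
    (α β : ℂ) (hα : α = ΨL 0) (hβ : β = ΨR 0)
    (hcond : ‖b‖ ^ 2 * (‖α‖ ^ 2 - ‖β‖ ^ 2)
      - 2 * ((starRingEnd ℂ) a * b * (starRingEnd ℂ) α * β).re = 0)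
    (μ : ℤ → ℝ)
    (hμ : ∀ x : ℤ, μ x = ‖ΨL x‖ ^ 2 + ‖ΨR x‖ ^ 2) :
    ∀ x : ℤ, μ x = ‖α‖ ^ 2 + ‖β‖ ^ 2 := by
  -- moduli of coefficients
  have hep : ‖Complex.exp (Complex.I * (σp:ℂ))‖ = 1 := by
    simp [Complex.norm_exp]
  have hem : ‖Complex.exp (Complex.I * (σm:ℂ))‖ = 1 := by
    simp [Complex.norm_exp]
  have hpp : ‖Δp * Complex.exp (-(Complex.I * (σp:ℂ)))‖ = 1 := by
    simp [map_mul, hΔp, Complex.norm_exp]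
  have hmm : ‖Δm * Complex.exp (-(Complex.I * (σm:ℂ)))‖ = 1 := by
    simp [map_mul, hΔm, Complex.norm_exp]
  -- step relations
  have stepLp : ∀ x : ℤ, 0 ≤ x → ‖ΨL (x+1)‖ = ‖ΨL x‖ :=
    fun x hx => (abs_transfer hlam hep (hL1 x hx)).symm
  have stepLm : ∀ x : ℤ, x ≤ -2 → ‖ΨL x‖ = ‖ΨL (x+1)‖ :=
    fun x hx => abs_transfer hlam hem (hL2 x hx)
  have stepRp : ∀ x : ℤ, 2 ≤ x → ‖ΨR x‖ = ‖ΨR (x-1)‖ :=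
    fun x hx => abs_transfer hlam hpp (hR1 x hx)
  have stepRm : ∀ x : ℤ, x ≤ 0 → ‖ΨR x‖ = ‖ΨR (x-1)‖ :=
    fun x hx => abs_transfer hlam hmm (hR2 x hx)
  -- norms of normSq facts
  have hNa : Complex.normSq a = ‖a‖ ^ 2 := (Complex.sq_norm a).symm
  have hNb : Complex.normSq b = ‖b‖ ^ 2 := (Complex.sq_norm b).symm
  have hNα : Complex.normSq α = ‖α‖ ^ 2 := (Complex.sq_norm α).symm
  have hNβ : Complex.normSq β = ‖β‖ ^ 2 := (Complex.sq_norm β).symm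
  have hΔ0n : Complex.normSq Δ0 = 1 := by rw [← Complex.sq_norm, hΔ0]; norm_num
  have hΔ0c : Δ0 * (starRingEnd ℂ) Δ0 = 1 := by
    rw [Complex.mul_conj, hΔ0n]; norm_num
  set R : ℝ := ((starRingEnd ℂ) a * b * (starRingEnd ℂ) α * β).re with hR
  -- boundary value for ΨL (-1)
  have hLm1 : ‖ΨL (-1)‖ ^ 2 = ‖α‖ ^ 2 := by
    have h1 : ‖ΨL (-1)‖ = ‖a*α + b*β‖ := by
      have h2 := congrArg (‖·‖) hL3
      rw [norm_mul, hlam, one_mul] at h2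
      rw [h2, hα, hβ]
    have hcr : (a * α * (starRingEnd ℂ) (b * β)).re = R := by
      have h3 : (starRingEnd ℂ) ((starRingEnd ℂ) a * b * (starRingEnd ℂ) α * β)
          = a * α * (starRingEnd ℂ) (b * β) := by
        simp only [map_mul, map_neg, Complex.conj_conj]; ring
      rw [hR, ← h3, Complex.conj_re]
    rw [h1, Complex.sq_norm, Complex.normSq_add, Complex.normSq_mul,
      Complex.normSq_mul, hcr, hNa, hNb, hNα, hNβ]
    linear_combination (‖α‖ ^ 2) * hab - hcond
  -- boundary value for ΨR 1
  have hR1v : ‖ΨR 1‖ ^ 2 = ‖β‖ ^ 2 := by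
    have h1 : ‖ΨR 1‖ = ‖c*α + d*β‖ := by
      have h2 := congrArg (‖·‖) hR3
      rw [norm_mul, hlam, one_mul] at h2
      rw [h2, hα, hβ]
    have hcr : (c * α * (starRingEnd ℂ) (d * β)).re = -R := by
      have h3 : c * α * (starRingEnd ℂ) (d * β)
          = -((Δ0 * (starRingEnd ℂ) Δ0) * ((starRingEnd ℂ) b * a * α * (starRingEnd ℂ) β)) := by
        rw [hc, hd]; simp only [map_mul, map_neg, Complex.conj_conj]; ring
      have h4 : (starRingEnd ℂ) ((starRingEnd ℂ) a * b * (starRingEnd ℂ) α * β)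
          = (starRingEnd ℂ) b * a * α * (starRingEnd ℂ) β := by
        simp only [map_mul, map_neg, Complex.conj_conj]; ring
      rw [h3, hΔ0c, one_mul, ← h4, Complex.neg_re, Complex.conj_re, hR]
    have hNc : Complex.normSq c = ‖b‖ ^ 2 := by
      rw [hc, Complex.normSq_mul, Complex.normSq_neg, hΔ0n, Complex.normSq_conj, one_mul, Complex.sq_norm]
    have hNd : Complex.normSq d = ‖a‖ ^ 2 := by
      rw [hd, Complex.normSq_mul, hΔ0n, Complex.normSq_conj, one_mul, Complex.sq_norm]
    rw [h1, Complex.sq_norm, Complex.normSq_add, Complex.normSq_mul,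
      Complex.normSq_mul, hcr, hNc, hNd, hNα, hNβ]
    linear_combination (‖β‖ ^ 2) * hab + hcond
  -- ΨL on nonneg integers
  have Lpos : ∀ n : ℕ, ‖ΨL n‖ = ‖α‖ := by
    intro n
    induction n with
    | zero => simp [hα]
    | succ k ih =>
        have h := stepLp (k : ℤ) (by positivity)
        push_cast
        push_cast at h ih
        rw [h, ih]
  -- ΨL on negative integers
  have Lneg : ∀ n : ℕ, ‖ΨL (-1 - n)‖ = ‖ΨL (-1)‖ := by
    intro n
    induction n with
    | zero => norm_num
    | succ k ih =>
        have h := stepLm (-1 - ((k:ℤ)+1)) (by omega)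
        have h2 : (-1 - ((k:ℤ)+1)) + 1 = -1 - (k:ℤ) := by ring
        rw [h2] at h
        push_cast
        rw [h, ih]
  -- ΨR on nonpositive integers
  have Rneg : ∀ n : ℕ, ‖ΨR (-n)‖ = ‖β‖ := by
    intro n
    induction n with
    | zero => simp [hβ]
    | succ k ih =>
        have h := stepRm (-(k:ℤ)) (by omega)
        have h2 : (-(k:ℤ)) - 1 = -((k:ℤ)+1) := by ring
        rw [h2] at h
        push_cast
        rw [← h, ih]
  -- ΨR on positive integers
  have Rpos : ∀ n : ℕ, ‖ΨR (1 + n)‖ = ‖ΨR 1‖ := by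
    intro n
    induction n with
    | zero => norm_num
    | succ k ih =>
        have h := stepRp (1 + ((k:ℤ)+1)) (by omega)
        have h2 : (1 + ((k:ℤ)+1)) - 1 = 1 + (k:ℤ) := by ring
        rw [h2] at h
        push_cast
        rw [h, ih]
  -- global statements (squared)
  have LAll : ∀ x : ℤ, ‖ΨL x‖ ^ 2 = ‖α‖ ^ 2 := by
    intro x
    rcases le_or_gt 0 x with hx | hx
    · obtain ⟨n, rfl⟩ := Int.eq_ofNat_of_zero_le hx
      rw [Lpos n]
    · have hx1 : 0 ≤ -1 - x := by omega
      obtain ⟨n, hn⟩ := Int.eq_ofNat_of_zero_le hx1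
      have hxe : x = -1 - (n:ℤ) := by omega
      rw [hxe, Lneg n, hLm1]
  have RAll : ∀ x : ℤ, ‖ΨR x‖ ^ 2 = ‖β‖ ^ 2 := by
    intro x
    rcases le_or_gt x 0 with hx | hx
    · have hx1 : 0 ≤ -x := by omega
      obtain ⟨n, hn⟩ := Int.eq_ofNat_of_zero_le hx1
      have hxe : x = -(n:ℤ) := by omega
      rw [hxe, Rneg n]
    · have hx1 : 0 ≤ x - 1 := by omega
      obtain ⟨n, hn⟩ := Int.eq_ofNat_of_zero_le hx1
      have hxe : x = 1 + (n:ℤ) := by omega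
      rw [hxe, Rpos n, hR1v]
  intro x
  rw [hμ x, LAll x, RAll x]
end

section
/- Let λ ∈ ℂ with |λ| = 1 and let Ψ^L, Ψ^R : ℤ → ℂ be an eigenvector of the 2-state diagonal quantum walk with one defect with eigenvalue λ, with α = Ψ^L(0), β = Ψ^R(0). For every z ∈ ℂ with 0 < |z| < 1, the generating functions f^L₊(z) = Σ_{x=1}^{∞} Ψ^L(x)·z^x and f^R₊(z) = Σ_{x=1}^{∞} Ψ^R(x)·z^x converge absolutely and satisfy (λ − e^{iσ₊}·z⁻¹)·f^L₊(z) = −λα and (λ − Δ⁺e^{−iσ₊}·z)·f^R₊(z) = (cα + dβ)·z. -/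
/-- Lemma 3.1, positive part: the generating functions on the positive half-line
converge absolutely for 0 < |z| < 1 and satisfy the splitted equations. -/
theorem two_state_diagonal_defect_generating_function_plus
    (σp σm : ℝ) (Δp Δm Δ0 a b c d : ℂ)
    (hΔp : ‖Δp‖ = 1) (hΔm : ‖Δm‖ = 1) (hΔ0 : ‖Δ0‖ = 1)
    (hab : ‖a‖ ^ 2 + ‖b‖ ^ 2 = 1)
    (hc : c = -Δ0 * (starRingEnd ℂ) b) (hd : d = Δ0 * (starRingEnd ℂ) a)
    (lam : ℂ) (hlam : ‖lam‖ = 1)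
    (ΨL ΨR : ℤ → ℂ)
    (hL1 : ∀ x : ℤ, 0 ≤ x →
      lam * ΨL x = Complex.exp (Complex.I * (σp : ℂ)) * ΨL (x + 1))
    (hL2 : ∀ x : ℤ, x ≤ -2 →
      lam * ΨL x = Complex.exp (Complex.I * (σm : ℂ)) * ΨL (x + 1))
    (hL3 : lam * ΨL (-1) = a * ΨL 0 + b * ΨR 0)
    (hR1 : ∀ x : ℤ, 2 ≤ x →
      lam * ΨR x = Δp * Complex.exp (-(Complex.I * (σp : ℂ))) * ΨR (x - 1))
    (hR2 : ∀ x : ℤ, x ≤ 0 →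
      lam * ΨR x = Δm * Complex.exp (-(Complex.I * (σm : ℂ))) * ΨR (x - 1))
    (hR3 : lam * ΨR 1 = c * ΨL 0 + d * ΨR 0)
    (α β : ℂ) (hα : α = ΨL 0) (hβ : β = ΨR 0) :
    ∀ z : ℂ, 0 < ‖z‖ → ‖z‖ < 1 →
      (Summable fun n : ℕ => ‖ΨL ((n : ℤ) + 1) * z ^ (n + 1)‖) ∧
      (Summable fun n : ℕ => ‖ΨR ((n : ℤ) + 1) * z ^ (n + 1)‖) ∧
      (lam - Complex.exp (Complex.I * (σp : ℂ)) * z⁻¹)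
          * (∑' n : ℕ, ΨL ((n : ℤ) + 1) * z ^ (n + 1)) = -lam * α ∧
      (lam - Δp * Complex.exp (-(Complex.I * (σp : ℂ))) * z)
          * (∑' n : ℕ, ΨR ((n : ℤ) + 1) * z ^ (n + 1)) = (c * α + d * β) * z := by
  intro z hz0 hz1
  have hlam0 : lam ≠ 0 := by
    intro h; rw [h] at hlam; simp at hlam
  have hz : z ≠ 0 := by
    intro h; rw [h] at hz0; simp at hz0
  set e : ℂ := Complex.exp (Complex.I * (σp : ℂ)) with he
  have he0 : e ≠ 0 := Complex.exp_ne_zero _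
  have habse : ‖e‖ = 1 := by
    rw [he, Complex.norm_exp]; simp
  set e' : ℂ := Complex.exp (-(Complex.I * (σp : ℂ))) with he'
  have habse' : ‖e'‖ = 1 := by
    rw [he', Complex.norm_exp]; simp
  set w : ℂ := e⁻¹ * lam * z with hw
  have hnw : ‖w‖ < 1 := by
    have h1 : ‖w‖ = ‖z‖ := by
      simp [hw, map_mul, map_inv₀, habse, hlam]
    simpa [h1] using hz1
  have hw1 : (1 : ℂ) - w ≠ 0 := by
    intro h
    have : w = 1 := by linear_combination -h
    rw [this] at hnw; simp at hnw
  set u : ℂ := lam⁻¹ * Δp * e' * z with hu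
  have hnu : ‖u‖ < 1 := by
    have h1 : ‖u‖ = ‖z‖ := by
      simp [hu, map_mul, map_inv₀, habse', hlam, hΔp]
    simpa [h1] using hz1
  have hu1 : (1 : ℂ) - u ≠ 0 := by
    intro h
    have : u = 1 := by linear_combination -h
    rw [this] at hnu; simp at hnu
  have keyL : ∀ n : ℕ, ΨL (n : ℤ) = (e⁻¹ * lam) ^ n * ΨL 0 := by
    intro n
    induction n with
    | zero => simp
    | succ n ih =>
      have h := hL1 n (Int.ofNat_nonneg n)
      have h2 : ΨL ((n : ℤ) + 1) = e⁻¹ * lam * ΨL n :=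
        mul_left_cancel₀ he0 (by rw [← h]; field_simp; try ring)
      push_cast
      rw [h2, ih]; ring
  have keyR : ∀ n : ℕ, ΨR ((n : ℤ) + 1) = (lam⁻¹ * Δp * e') ^ n * ΨR 1 := by
    intro n
    induction n with
    | zero => simp
    | succ n ih =>
      have h := hR1 ((n : ℤ) + 2) (by omega)
      have hs : ((n : ℤ) + 2 - 1) = (n : ℤ) + 1 := by ring
      rw [hs] at h
      have h2 : ΨR ((n : ℤ) + 2) = lam⁻¹ * Δp * e' * ΨR ((n : ℤ) + 1) :=
        mul_left_cancel₀ hlam0 (by rw [h]; field_simp; try ring)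
      push_cast
      have hs2 : ((n : ℤ) + 1 + 1) = (n : ℤ) + 2 := by ring
      rw [hs2, h2, ih]; ring
  have hLfun : ∀ n : ℕ, ΨL ((n : ℤ) + 1) * z ^ (n + 1) = (α * w) * w ^ n := by
    intro n
    have h := keyL (n + 1)
    push_cast at h
    rw [h, hα, hw]; ring
  have hRfun : ∀ n : ℕ, ΨR ((n : ℤ) + 1) * z ^ (n + 1) = (ΨR 1 * z) * u ^ n := by
    intro n
    rw [keyR n, hu]; ring
  have sL : Summable fun n : ℕ => ‖ΨL ((n : ℤ) + 1) * z ^ (n + 1)‖ := by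
    have h : Summable fun n : ℕ => ‖α * w‖ * ‖w‖ ^ n :=
      (summable_geometric_of_lt_one (norm_nonneg w) hnw).mul_left _
    simpa [hLfun, norm_mul, norm_pow] using h
  have sR : Summable fun n : ℕ => ‖ΨR ((n : ℤ) + 1) * z ^ (n + 1)‖ := by
    have h : Summable fun n : ℕ => ‖ΨR 1 * z‖ * ‖u‖ ^ n :=
      (summable_geometric_of_lt_one (norm_nonneg u) hnu).mul_left _
    simpa [hRfun, norm_mul, norm_pow] using h
  have htsumL : (∑' n : ℕ, ΨL ((n : ℤ) + 1) * z ^ (n + 1)) = (α * w) * (1 - w)⁻¹ := by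
    rw [tsum_congr hLfun, tsum_mul_left, tsum_geometric_of_norm_lt_one hnw]
  have htsumR : (∑' n : ℕ, ΨR ((n : ℤ) + 1) * z ^ (n + 1)) = (ΨR 1 * z) * (1 - u)⁻¹ := by
    rw [tsum_congr hRfun, tsum_mul_left, tsum_geometric_of_norm_lt_one hnu]
  refine ⟨sL, sR, ?_, ?_⟩
  · rw [htsumL]
    have hfac : lam - e * z⁻¹ = -e * z⁻¹ * (1 - w) := by
      rw [hw]; field_simp; ring
    rw [hfac]
    calc -e * z⁻¹ * (1 - w) * (α * w * (1 - w)⁻¹)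
        = -e * z⁻¹ * α * w * ((1 - w) * (1 - w)⁻¹) := by ring
      _ = -lam * α := by rw [mul_inv_cancel₀ hw1, hw]; field_simp
  · rw [htsumR]
    have hfac : lam - Δp * e' * z = lam * (1 - u) := by
      rw [hu]; field_simp; try ring
    have hR1' : lam * ΨR 1 = c * α + d * β := by rw [hα, hβ]; exact hR3
    rw [hfac]
    calc lam * (1 - u) * (ΨR 1 * z * (1 - u)⁻¹)
        = (lam * ΨR 1) * z * ((1 - u) * (1 - u)⁻¹) := by ring
      _ = (c * α + d * β) * z := by rw [mul_inv_cancel₀ hu1, hR1']; ring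
end

section
/- Let λ ∈ ℂ with |λ| = 1 and let Ψ^L, Ψ^R : ℤ → ℂ be an eigenvector of the 2-state diagonal quantum walk with one defect with eigenvalue λ, with α = Ψ^L(0), β = Ψ^R(0). For every z ∈ ℂ with |z| > 1, the generating functions f^L₋(z) = Σ_{x=1}^{∞} Ψ^L(−x)·z^{−x} and f^R₋(z) = Σ_{x=1}^{∞} Ψ^R(−x)·z^{−x} converge absolutely and satisfy (λ − e^{iσ₋}·z⁻¹)·f^L₋(z) = (aα + bβ)·z⁻¹ and (λ − Δ⁻e^{−iσ₋}·z)·f^R₋(z) = −λβ. -/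
/-- Lemma 3.1, negative part: the generating functions on the negative half-line
converge absolutely for |z| > 1 and satisfy the splitted equations. -/
theorem two_state_diagonal_defect_generating_function_minus
    (σp σm : ℝ) (Δp Δm Δ0 a b c d : ℂ)
    (hΔp : ‖Δp‖ = 1) (hΔm : ‖Δm‖ = 1) (hΔ0 : ‖Δ0‖ = 1)
    (hab : ‖a‖ ^ 2 + ‖b‖ ^ 2 = 1)
    (hc : c = -Δ0 * (starRingEnd ℂ) b) (hd : d = Δ0 * (starRingEnd ℂ) a)
    (lam : ℂ) (hlam : ‖lam‖ = 1)
    (ΨL ΨR : ℤ → ℂ)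
    (hL1 : ∀ x : ℤ, 0 ≤ x →
      lam * ΨL x = Complex.exp (Complex.I * (σp : ℂ)) * ΨL (x + 1))
    (hL2 : ∀ x : ℤ, x ≤ -2 →
      lam * ΨL x = Complex.exp (Complex.I * (σm : ℂ)) * ΨL (x + 1))
    (hL3 : lam * ΨL (-1) = a * ΨL 0 + b * ΨR 0)
    (hR1 : ∀ x : ℤ, 2 ≤ x →
      lam * ΨR x = Δp * Complex.exp (-(Complex.I * (σp : ℂ))) * ΨR (x - 1))
    (hR2 : ∀ x : ℤ, x ≤ 0 →
      lam * ΨR x = Δm * Complex.exp (-(Complex.I * (σm : ℂ))) * ΨR (x - 1))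
    (hR3 : lam * ΨR 1 = c * ΨL 0 + d * ΨR 0)
    (α β : ℂ) (hα : α = ΨL 0) (hβ : β = ΨR 0) :
    ∀ z : ℂ, 1 < ‖z‖ →
      (Summable fun n : ℕ => ‖ΨL (-((n : ℤ) + 1)) * z ^ (-((n : ℤ) + 1))‖) ∧
      (Summable fun n : ℕ => ‖ΨR (-((n : ℤ) + 1)) * z ^ (-((n : ℤ) + 1))‖) ∧
      (lam - Complex.exp (Complex.I * (σm : ℂ)) * z⁻¹)
          * (∑' n : ℕ, ΨL (-((n : ℤ) + 1)) * z ^ (-((n : ℤ) + 1)))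
        = (a * α + b * β) * z⁻¹ ∧
      (lam - Δm * Complex.exp (-(Complex.I * (σm : ℂ))) * z)
          * (∑' n : ℕ, ΨR (-((n : ℤ) + 1)) * z ^ (-((n : ℤ) + 1))) = -lam * β := by
  intro z hz
  have hz0 : z ≠ 0 := by
    intro h; rw [h] at hz; simp at hz; linarith
  have hlam0 : lam ≠ 0 := by
    intro h; rw [h] at hlam; simp at hlam
  set e : ℂ := Complex.exp (Complex.I * (σm : ℂ)) with he
  set D : ℂ := Δm * Complex.exp (-(Complex.I * (σm : ℂ))) with hD
  have hΔm0 : Δm ≠ 0 := by intro h; rw [h] at hΔm; simp at hΔm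
  have hD0 : D ≠ 0 := mul_ne_zero hΔm0 (Complex.exp_ne_zero _)
  have heabs : ‖e‖ = 1 := by
    rw [he, Complex.norm_exp]; simp
  have hDabs : ‖D‖ = 1 := by
    rw [hD, norm_mul, hΔm, one_mul, Complex.norm_exp]; simp
  set w : ℂ := z⁻¹ with hw
  have hwn : ‖w‖ < 1 := by
    rw [hw, norm_inv, inv_lt_one_iff₀]
    right; exact hz
  set q : ℂ := e * lam⁻¹ with hq
  set r : ℂ := lam * D⁻¹ with hr
  have hqabs : ‖q‖ = 1 := by
    rw [hq, norm_mul, norm_inv, heabs, hlam]; norm_num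
  have hrabs : ‖r‖ = 1 := by
    rw [hr, norm_mul, norm_inv, hDabs, hlam]; norm_num
  have hqw : ‖q * w‖ < 1 := by
    rw [norm_mul, hqabs, one_mul]; exact hwn
  have hrw : ‖r * w‖ < 1 := by
    rw [norm_mul, hrabs, one_mul]; exact hwn
  have hqw1 : (1 : ℂ) - q * w ≠ 0 := by
    intro h
    have : q * w = 1 := by linear_combination -h
    rw [this] at hqw; simp at hqw
  have hrw1 : (1 : ℂ) - r * w ≠ 0 := by
    intro h
    have : r * w = 1 := by linear_combination -h
    rw [this] at hrw; simp at hrw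
  have hzpow : ∀ n : ℕ, z ^ (-((n : ℤ) + 1)) = w ^ (n + 1) := by
    intro n
    rw [show (-((n : ℤ) + 1)) = -(((n + 1 : ℕ) : ℤ)) by push_cast; ring]
    rw [zpow_neg, zpow_natCast, ← inv_pow]
  -- closed form for ΨL
  have hA : ∀ n : ℕ, ΨL (-((n : ℤ) + 1)) = q ^ n * ΨL (-1) := by
    intro n
    induction n with
    | zero => norm_num
    | succ n ih =>
      have h := hL2 (-((n : ℤ) + 2)) (by omega)
      rw [show (-((n : ℤ) + 2) + 1) = -((n : ℤ) + 1) by ring] at h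
      have key : ΨL (-((n : ℤ) + 2)) = q * ΨL (-((n : ℤ) + 1)) := by
        apply mul_left_cancel₀ hlam0
        rw [h, hq]
        field_simp
      rw [show (-(((n + 1 : ℕ) : ℤ) + 1)) = -((n : ℤ) + 2) by push_cast; ring]
      rw [key, ih, pow_succ]
      ring
  -- closed form for ΨR
  have hB : ∀ n : ℕ, ΨR (-((n : ℤ) + 1)) = r ^ (n + 1) * ΨR 0 := by
    intro n
    induction n with
    | zero =>
      have h := hR2 0 le_rfl
      have key : ΨR (0 - 1) = r * ΨR 0 := by
        apply mul_left_cancel₀ hD0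
        rw [← h, hr]
        field_simp
      norm_num at key ⊢
      rw [key]
    | succ n ih =>
      have h := hR2 (-((n : ℤ) + 1)) (by omega)
      rw [show (-((n : ℤ) + 1) - 1) = -((n : ℤ) + 2) by ring] at h
      have key : ΨR (-((n : ℤ) + 2)) = r * ΨR (-((n : ℤ) + 1)) := by
        apply mul_left_cancel₀ hD0
        rw [← h, hr]
        field_simp
      rw [show (-(((n + 1 : ℕ) : ℤ) + 1)) = -((n : ℤ) + 2) by push_cast; ring]
      rw [key, ih, pow_succ]
      ring
  have htermL : ∀ n : ℕ, ΨL (-((n : ℤ) + 1)) * z ^ (-((n : ℤ) + 1))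
      = (ΨL (-1) * w) * (q * w) ^ n := by
    intro n
    rw [hA n, hzpow n, mul_pow, pow_succ]
    ring
  have htermR : ∀ n : ℕ, ΨR (-((n : ℤ) + 1)) * z ^ (-((n : ℤ) + 1))
      = (ΨR 0 * (r * w)) * (r * w) ^ n := by
    intro n
    rw [hB n, hzpow n, mul_pow, pow_succ, pow_succ, mul_pow]
    ring
  have hsumL : Summable fun n : ℕ => ‖ΨL (-((n : ℤ) + 1)) * z ^ (-((n : ℤ) + 1))‖ := by
    simp_rw [htermL, norm_mul, norm_pow]
    exact (summable_geometric_of_lt_one (norm_nonneg _) hqw).mul_left _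
  have hsumR : Summable fun n : ℕ => ‖ΨR (-((n : ℤ) + 1)) * z ^ (-((n : ℤ) + 1))‖ := by
    simp_rw [htermR, norm_mul, norm_pow]
    exact (summable_geometric_of_lt_one (norm_nonneg _) hrw).mul_left _
  have htsumL : (∑' n : ℕ, ΨL (-((n : ℤ) + 1)) * z ^ (-((n : ℤ) + 1)))
      = (ΨL (-1) * w) * (1 - q * w)⁻¹ := by
    simp_rw [htermL]
    rw [tsum_mul_left, tsum_geometric_of_norm_lt_one hqw]
  have htsumR : (∑' n : ℕ, ΨR (-((n : ℤ) + 1)) * z ^ (-((n : ℤ) + 1)))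
      = (ΨR 0 * (r * w)) * (1 - r * w)⁻¹ := by
    simp_rw [htermR]
    rw [tsum_mul_left, tsum_geometric_of_norm_lt_one hrw]
  have hzw : z * w = 1 := mul_inv_cancel₀ hz0
  have hDinv : D * D⁻¹ = 1 := mul_inv_cancel₀ hD0
  have hlaminv : lam * lam⁻¹ = 1 := mul_inv_cancel₀ hlam0
  refine ⟨hsumL, hsumR, ?_, ?_⟩
  · rw [htsumL]
    have habβ : a * α + b * β = lam * ΨL (-1) := by rw [hα, hβ, ← hL3]
    rw [habβ]
    have hfac : lam - e * w = lam * (1 - q * w) := by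
      rw [hq]; linear_combination (e * w) * hlaminv
    rw [hfac]
    calc lam * (1 - q * w) * (ΨL (-1) * w * (1 - q * w)⁻¹)
        = lam * ΨL (-1) * w * ((1 - q * w) * (1 - q * w)⁻¹) := by ring
      _ = lam * ΨL (-1) * w := by rw [mul_inv_cancel₀ hqw1, mul_one]
  · rw [htsumR, ← hβ]
    have hfac : lam - D * z = -D * z * (1 - r * w) := by
      rw [hr]; linear_combination (-lam * D * D⁻¹) * hzw + (-lam) * hDinv
    rw [hfac]
    calc -D * z * (1 - r * w) * (β * (r * w) * (1 - r * w)⁻¹)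
        = -(D * z * β * (r * w)) * ((1 - r * w) * (1 - r * w)⁻¹) := by ring
      _ = -(D * z * β * (r * w)) := by rw [mul_inv_cancel₀ hrw1, mul_one]
      _ = -lam * β := by
          rw [hr]
          linear_combination (-lam * β * D * D⁻¹) * hzw + (-lam * β) * hDinv
end

section
/- Let λ ∈ ℂ with |λ| = 1, λ ≠ e^{−iσ₊} and λ ≠ e^{−iσ₋}, and let Ψ^L, Ψ^O, Ψ^R : ℤ → ℂ be an eigenvector of the 3-state diagonal quantum walk with one defect with eigenvalue λ, with α = Ψ^L(0), γ = Ψ^O(0), β = Ψ^R(0). Then the measure μ(x) = |Ψ^L(x)|² + |Ψ^O(x)|² + |Ψ^R(x)|² satisfies: μ(x) = (1+|g|²)|α|² + |h|²|γ|² + |i|²|β|² + 2·Re(g·α·conj(h)·conj(γ) + g·α·conj(i)·conj(β) + h·γ·conj(i)·conj(β)) for all x ≥ 1; μ(0) = |α|² + |γ|² + |β|²; and μ(x) = |a|²|α|² + (1+|c|²)|β|² + |b|²|γ|² + 2·Re(a·α·conj(b)·conj(γ) + a·α·conj(c)·conj(β) + b·γ·conj(c)·conj(β)) for all x ≤ −1.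 -/
/-- Theorem 4.1: the stationary measure of the 3-state diagonal QW with one defect. -/
theorem three_state_diagonal_defect_stationary_measure
    (σp σm : ℝ) (Δp Δm a b c d e f g h i : ℂ)
    (hΔp : ‖Δp‖ = 1) (hΔm : ‖Δm‖ = 1)
    (hU0 : !![a, b, c; d, e, f; g, h, i] ∈ Matrix.unitaryGroup (Fin 3) ℂ)
    (lam : ℂ) (hlam : ‖lam‖ = 1)
    (hlamp : lam ≠ Complex.exp (-(Complex.I * (σp : ℂ))))
    (hlamm : lam ≠ Complex.exp (-(Complex.I * (σm : ℂ))))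
    (ΨL ΨO ΨR : ℤ → ℂ)
    (hL1 : ∀ x : ℤ, 0 ≤ x →
      lam * ΨL x = Complex.exp (Complex.I * (σp : ℂ)) * ΨL (x + 1))
    (hL2 : ∀ x : ℤ, x ≤ -2 →
      lam * ΨL x = Complex.exp (Complex.I * (σm : ℂ)) * ΨL (x + 1))
    (hL3 : lam * ΨL (-1) = a * ΨL 0 + b * ΨO 0 + c * ΨR 0)
    (hO1 : ∀ x : ℤ, 1 ≤ x →
      lam * ΨO x = Complex.exp (-(Complex.I * (σp : ℂ))) * ΨO x)
    (hO2 : ∀ x : ℤ, x ≤ -1 →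
      lam * ΨO x = Complex.exp (-(Complex.I * (σm : ℂ))) * ΨO x)
    (hO3 : lam * ΨO 0 = d * ΨL 0 + e * ΨO 0 + f * ΨR 0)
    (hR1 : ∀ x : ℤ, 2 ≤ x → lam * ΨR x = Δp * ΨR (x - 1))
    (hR2 : ∀ x : ℤ, x ≤ 0 → lam * ΨR x = Δm * ΨR (x - 1))
    (hR3 : lam * ΨR 1 = g * ΨL 0 + h * ΨO 0 + i * ΨR 0)
    (α γ β : ℂ) (hα : α = ΨL 0) (hγ : γ = ΨO 0) (hβ : β = ΨR 0)
    (μ : ℤ → ℝ)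
    (hμ : ∀ x : ℤ, μ x = ‖ΨL x‖ ^ 2 + ‖ΨO x‖ ^ 2
                          + ‖ΨR x‖ ^ 2) :
    (∀ x : ℤ, 1 ≤ x →
      μ x = (1 + ‖g‖ ^ 2) * ‖α‖ ^ 2
              + ‖h‖ ^ 2 * ‖γ‖ ^ 2
              + ‖i‖ ^ 2 * ‖β‖ ^ 2
              + 2 * (g * α * (starRingEnd ℂ) h * (starRingEnd ℂ) γ
                      + g * α * (starRingEnd ℂ) i * (starRingEnd ℂ) β
                      + h * γ * (starRingEnd ℂ) i * (starRingEnd ℂ) β).re) ∧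
    μ 0 = ‖α‖ ^ 2 + ‖γ‖ ^ 2 + ‖β‖ ^ 2 ∧
    (∀ x : ℤ, x ≤ -1 →
      μ x = ‖a‖ ^ 2 * ‖α‖ ^ 2
              + (1 + ‖c‖ ^ 2) * ‖β‖ ^ 2
              + ‖b‖ ^ 2 * ‖γ‖ ^ 2
              + 2 * (a * α * (starRingEnd ℂ) b * (starRingEnd ℂ) γ
                      + a * α * (starRingEnd ℂ) c * (starRingEnd ℂ) β
                      + b * γ * (starRingEnd ℂ) c * (starRingEnd ℂ) β).re) := by

  have hexp : ∀ σ : ℝ, ‖Complex.exp (Complex.I * (σ : ℂ))‖ = 1 := by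
    intro σ
    simp [Complex.norm_exp]
  -- ΨO vanishes away from the origin
  have hOp : ∀ x : ℤ, 1 ≤ x → ΨO x = 0 := by
    intro x hx
    have h1 := hO1 x hx
    have h2 : (lam - Complex.exp (-(Complex.I * (σp : ℂ)))) * ΨO x = 0 := by
      linear_combination h1
    rcases mul_eq_zero.mp h2 with h | h
    · exact absurd (sub_eq_zero.mp h) hlamp
    · exact h
  have hOm : ∀ x : ℤ, x ≤ -1 → ΨO x = 0 := by
    intro x hx
    have h1 := hO2 x hx
    have h2 : (lam - Complex.exp (-(Complex.I * (σm : ℂ)))) * ΨO x = 0 := by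
      linear_combination h1
    rcases mul_eq_zero.mp h2 with h | h
    · exact absurd (sub_eq_zero.mp h) hlamm
    · exact h
  -- |ΨL x| = |α| for x ≥ 0
  have hLp : ∀ x : ℤ, 0 ≤ x → ‖ΨL x‖ = ‖α‖ := by
    intro x
    refine Int.le_induction (motive := fun y _ => ‖ΨL y‖ = ‖α‖) ?_ ?_ x
    · rw [hα]
    · intro n hn ih
      have h2 := congrArg (‖·‖) (hL1 n hn)
      rw [norm_mul, norm_mul, hlam, one_mul, hexp σp, one_mul] at h2
      rw [← h2]; exact ih
  -- |ΨR x| = |g α + h γ + i β| for x ≥ 1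
  have hRbase : ‖ΨR 1‖ = ‖g * α + h * γ + i * β‖ := by
    have h2 := congrArg (‖·‖) hR3
    rw [norm_mul, hlam, one_mul] at h2
    rw [h2, hα, hγ, hβ]
  have hRp : ∀ x : ℤ, 1 ≤ x →
      ‖ΨR x‖ = ‖g * α + h * γ + i * β‖ := by
    intro x
    refine Int.le_induction (motive := fun y _ => ‖ΨR y‖ = ‖g * α + h * γ + i * β‖) ?_ ?_ x
    · exact hRbase
    · intro n hn ih
      have h2 := congrArg (‖·‖) (hR1 (n + 1) (by omega))
      rw [norm_mul, norm_mul, hlam, one_mul, hΔp, one_mul] at h2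
      simp only [add_sub_cancel_right] at h2
      rw [h2]; exact ih
  -- |ΨL x| = |a α + b γ + c β| for x ≤ -1
  have hLbase : ‖ΨL (-1)‖ = ‖a * α + b * γ + c * β‖ := by
    have h2 := congrArg (‖·‖) hL3
    rw [norm_mul, hlam, one_mul] at h2
    rw [h2, hα, hγ, hβ]
  have hLm : ∀ x : ℤ, x ≤ -1 →
      ‖ΨL x‖ = ‖a * α + b * γ + c * β‖ := by
    intro x
    refine Int.le_induction_down (motive := fun y _ => ‖ΨL y‖ = ‖a * α + b * γ + c * β‖) ?_ ?_ x
    · exact hLbase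
    · intro n hn ih
      have h2 := congrArg (‖·‖) (hL2 (n - 1) (by omega))
      rw [norm_mul, norm_mul, hlam, one_mul, hexp σm, one_mul] at h2
      simp only [sub_add_cancel] at h2
      rw [h2]; exact ih
  -- |ΨR x| = |β| for x ≤ 0
  have hRm : ∀ x : ℤ, x ≤ 0 → ‖ΨR x‖ = ‖β‖ := by
    intro x
    refine Int.le_induction_down (motive := fun y _ => ‖ΨR y‖ = ‖β‖) ?_ ?_ x
    · rw [hβ]
    · intro n hn ih
      have h2 := congrArg (‖·‖) (hR2 n hn)
      rw [norm_mul, norm_mul, hlam, one_mul, hΔm, one_mul] at h2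
      rw [← h2]; exact ih
  refine ⟨?_, ?_, ?_⟩
  · intro x hx
    rw [hμ x, hLp x (by omega), hOp x hx, hRp x hx]
    simp only [map_zero, norm_zero, ne_eq, OfNat.ofNat_ne_zero, not_false_eq_true, zero_pow]
    simp only [Complex.sq_norm, Complex.normSq_apply, Complex.add_re, Complex.add_im,
      Complex.mul_re, Complex.mul_im, Complex.conj_re, Complex.conj_im]
    ring
  · rw [hμ 0, hα, hγ, hβ]
  · intro x hx
    rw [hμ x, hLm x hx, hOm x hx, hRm x (by omega)]
    simp only [map_zero, norm_zero, ne_eq, OfNat.ofNat_ne_zero, not_false_eq_true, zero_pow]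
    simp only [Complex.sq_norm, Complex.normSq_apply, Complex.add_re, Complex.add_im,
      Complex.mul_re, Complex.mul_im, Complex.conj_re, Complex.conj_im]
    ring
end

section
/- Let λ ∈ ℂ with λ ≠ 0, λ ≠ e^{−iσ₊} and λ ≠ e^{−iσ₋}, and let Ψ^L, Ψ^O, Ψ^R : ℤ → ℂ be an eigenvector of the 3-state diagonal quantum walk with one defect with eigenvalue λ, with α = Ψ^L(0), γ = Ψ^O(0), β = Ψ^R(0). Then the amplitudes are given explicitly by: for x ≥ 1, Ψ^L(x) = (λ·e^{−iσ₊})^x·α, Ψ^O(x) = 0, Ψ^R(x) = λ⁻¹(gα + hγ + iβ)·(λ⁻¹Δ⁺)^{x−1}; and for x ≤ −1, Ψ^L(x) = λ⁻¹(aα + bγ + cβ)·(λ⁻¹e^{iσ₋})^{−x−1}, Ψ^O(x) = 0, Ψ^R(x) = (λ·(Δ⁻)⁻¹)^{−x}·β. -/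
/-- Explicit form of the stationary amplitudes of the 3-state diagonal QW with one defect. -/
theorem three_state_diagonal_defect_amplitudes
    (σp σm : ℝ) (Δp Δm a b c d e f g h i : ℂ)
    (hΔp : ‖Δp‖ = 1) (hΔm : ‖Δm‖ = 1)
    (hU0 : !![a, b, c; d, e, f; g, h, i] ∈ Matrix.unitaryGroup (Fin 3) ℂ)
    (lam : ℂ) (hlam0 : lam ≠ 0)
    (hlamp : lam ≠ Complex.exp (-(Complex.I * (σp : ℂ))))
    (hlamm : lam ≠ Complex.exp (-(Complex.I * (σm : ℂ))))
    (ΨL ΨO ΨR : ℤ → ℂ)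
    (hL1 : ∀ x : ℤ, 0 ≤ x →
      lam * ΨL x = Complex.exp (Complex.I * (σp : ℂ)) * ΨL (x + 1))
    (hL2 : ∀ x : ℤ, x ≤ -2 →
      lam * ΨL x = Complex.exp (Complex.I * (σm : ℂ)) * ΨL (x + 1))
    (hL3 : lam * ΨL (-1) = a * ΨL 0 + b * ΨO 0 + c * ΨR 0)
    (hO1 : ∀ x : ℤ, 1 ≤ x →
      lam * ΨO x = Complex.exp (-(Complex.I * (σp : ℂ))) * ΨO x)
    (hO2 : ∀ x : ℤ, x ≤ -1 →
      lam * ΨO x = Complex.exp (-(Complex.I * (σm : ℂ))) * ΨO x)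
    (hO3 : lam * ΨO 0 = d * ΨL 0 + e * ΨO 0 + f * ΨR 0)
    (hR1 : ∀ x : ℤ, 2 ≤ x → lam * ΨR x = Δp * ΨR (x - 1))
    (hR2 : ∀ x : ℤ, x ≤ 0 → lam * ΨR x = Δm * ΨR (x - 1))
    (hR3 : lam * ΨR 1 = g * ΨL 0 + h * ΨO 0 + i * ΨR 0)
    (α γ β : ℂ) (hα : α = ΨL 0) (hγ : γ = ΨO 0) (hβ : β = ΨR 0) :
    (∀ x : ℤ, 1 ≤ x →
      ΨL x = (lam * Complex.exp (-(Complex.I * (σp : ℂ)))) ^ x * α ∧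
      ΨO x = 0 ∧
      ΨR x = lam⁻¹ * (g * α + h * γ + i * β) * (lam⁻¹ * Δp) ^ (x - 1)) ∧
    (∀ x : ℤ, x ≤ -1 →
      ΨL x = lam⁻¹ * (a * α + b * γ + c * β)
              * (lam⁻¹ * Complex.exp (Complex.I * (σm : ℂ))) ^ (-x - 1) ∧
      ΨO x = 0 ∧
      ΨR x = (lam * Δm⁻¹) ^ (-x) * β) := by
  subst hα hγ hβ
  have hΔpne : Δp ≠ 0 := fun hh => by simp [hh] at hΔp
  have hΔmne : Δm ≠ 0 := fun hh => by simp [hh] at hΔm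
  have hqp : lam * Complex.exp (-(Complex.I * (σp : ℂ))) ≠ 0 :=
    mul_ne_zero hlam0 (Complex.exp_ne_zero _)
  have hqR : lam⁻¹ * Δp ≠ 0 := mul_ne_zero (inv_ne_zero hlam0) hΔpne
  have hqm : lam⁻¹ * Complex.exp (Complex.I * (σm : ℂ)) ≠ 0 :=
    mul_ne_zero (inv_ne_zero hlam0) (Complex.exp_ne_zero _)
  have hqRm : lam * Δm⁻¹ ≠ 0 := mul_ne_zero hlam0 (inv_ne_zero hΔmne)
  -- ΨL positive
  have hLpos : ∀ x : ℤ, 0 ≤ x →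
      ΨL x = (lam * Complex.exp (-(Complex.I * (σp : ℂ)))) ^ x * ΨL 0 := by
    intro x hx
    refine Int.le_induction (motive := fun y _ => ΨL y = (lam * Complex.exp (-(Complex.I * (σp : ℂ)))) ^ y * ΨL 0) ?_ ?_ x hx
    · simp
    · intro n hn ih
      have h := hL1 n hn
      have he := Complex.exp_ne_zero (Complex.I * (σp : ℂ))
      have hΨ : ΨL (n + 1) = lam * Complex.exp (-(Complex.I * (σp : ℂ))) * ΨL n := by
        rw [Complex.exp_neg]
        field_simp
        first
        | linear_combination h
        | linear_combination -h
      rw [hΨ, ih, zpow_add_one₀ hqp]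
      ring
  -- ΨR positive
  have hRpos : ∀ x : ℤ, 1 ≤ x → ΨR x = ΨR 1 * (lam⁻¹ * Δp) ^ (x - 1) := by
    intro x hx
    refine Int.le_induction (motive := fun y _ => ΨR y = ΨR 1 * (lam⁻¹ * Δp) ^ (y - 1)) ?_ ?_ x hx
    · norm_num
    · intro n hn ih
      have h := hR1 (n + 1) (by omega)
      rw [show (n + 1 - 1 : ℤ) = n by ring] at h
      have hΨ : ΨR (n + 1) = lam⁻¹ * Δp * ΨR n := by
        field_simp
        first
        | linear_combination h
        | linear_combination -h
      rw [hΨ, ih, show (n + 1 - 1 : ℤ) = (n - 1) + 1 by ring, zpow_add_one₀ hqR]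
      ring
  -- ΨL negative
  have hLneg : ∀ x : ℤ, x ≤ -1 →
      ΨL x = ΨL (-1) * (lam⁻¹ * Complex.exp (Complex.I * (σm : ℂ))) ^ (-x - 1) := by
    intro x hx
    refine Int.le_induction_down (motive := fun y _ => ΨL y = ΨL (-1) * (lam⁻¹ * Complex.exp (Complex.I * (σm : ℂ))) ^ (-y - 1)) ?_ ?_ x hx
    · norm_num
    · intro n hn ih
      have h := hL2 (n - 1) (by omega)
      rw [show (n - 1 + 1 : ℤ) = n by ring] at h
      have hΨ : ΨL (n - 1) = lam⁻¹ * Complex.exp (Complex.I * (σm : ℂ)) * ΨL n := by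
        field_simp
        first
        | linear_combination h
        | linear_combination -h
      rw [hΨ, ih, show (-(n - 1) - 1 : ℤ) = (-n - 1) + 1 by ring, zpow_add_one₀ hqm]
      ring
  -- ΨR negative
  have hRneg : ∀ x : ℤ, x ≤ 0 → ΨR x = (lam * Δm⁻¹) ^ (-x) * ΨR 0 := by
    intro x hx
    refine Int.le_induction_down (motive := fun y _ => ΨR y = (lam * Δm⁻¹) ^ (-y) * ΨR 0) ?_ ?_ x hx
    · norm_num
    · intro n hn ih
      have h := hR2 n hn
      have hΨ : ΨR (n - 1) = lam * Δm⁻¹ * ΨR n := by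
        field_simp
        first
        | linear_combination h
        | linear_combination -h
      rw [hΨ, ih, show (-(n - 1) : ℤ) = (-n) + 1 by ring, zpow_add_one₀ hqRm]
      ring
  -- boundary values
  have hL0 : ΨL (-1) = lam⁻¹ * (a * ΨL 0 + b * ΨO 0 + c * ΨR 0) := by
    field_simp
    first
    | linear_combination hL3
    | linear_combination -hL3
  have hR1v : ΨR 1 = lam⁻¹ * (g * ΨL 0 + h * ΨO 0 + i * ΨR 0) := by
    field_simp
    first
    | linear_combination hR3
    | linear_combination -hR3
  constructor
  · intro x hx
    refine ⟨hLpos x (by omega), ?_, ?_⟩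
    · have hh := hO1 x hx
      have h2 : (lam - Complex.exp (-(Complex.I * (σp : ℂ)))) * ΨO x = 0 := by
        linear_combination hh
      rcases mul_eq_zero.mp h2 with h3 | h3
      · exact absurd (sub_eq_zero.mp h3) hlamp
      · exact h3
    · rw [hRpos x hx, hR1v]
  · intro x hx
    refine ⟨?_, ?_, ?_⟩
    · rw [hLneg x hx, hL0]
    · have hh := hO2 x hx
      have h2 : (lam - Complex.exp (-(Complex.I * (σm : ℂ)))) * ΨO x = 0 := by
        linear_combination hh
      rcases mul_eq_zero.mp h2 with h3 | h3
      · exact absurd (sub_eq_zero.mp h3) hlamm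
      · exact h3
    · exact hRneg x (by omega)
end

section
/- Let λ ∈ ℂ with λ ≠ 0, and let α, β, γ ∈ ℂ satisfy the consistency condition λγ = dα + eγ + fβ. Define Ψ^L, Ψ^O, Ψ^R : ℤ → ℂ by Ψ^L(0) = α, Ψ^O(0) = γ, Ψ^R(0) = β, and for x ≥ 1: Ψ^L(x) = (λ·e^{−iσ₊})^x·α, Ψ^O(x) = 0, Ψ^R(x) = λ⁻¹(gα + hγ + iβ)·(λ⁻¹Δ⁺)^{x−1}; for x ≤ −1: Ψ^L(x) = λ⁻¹(aα + bγ + cβ)·(λ⁻¹e^{iσ₋})^{−x−1}, Ψ^O(x) = 0, Ψ^R(x) = (λ·(Δ⁻)⁻¹)^{−x}·β. Then (Ψ^L, Ψ^O, Ψ^R) is an eigenvector of the 3-state diagonal quantum walk with one defect with eigenvalue λ. -/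
/-- Conversely, the explicit formulas (with the consistency condition λγ = dα + eγ + fβ)
define an eigenvector of the 3-state diagonal QW with one defect. -/
theorem three_state_diagonal_defect_amplitudes_are_eigenvector
    (σp σm : ℝ) (Δp Δm a b c d e f g h i : ℂ)
    (hΔp : ‖Δp‖ = 1) (hΔm : ‖Δm‖ = 1)
    (hU0 : !![a, b, c; d, e, f; g, h, i] ∈ Matrix.unitaryGroup (Fin 3) ℂ)
    (lam : ℂ) (hlam0 : lam ≠ 0)
    (α β γ : ℂ) (hγcond : lam * γ = d * α + e * γ + f * β)
    (ΨL ΨO ΨR : ℤ → ℂ)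
    (hΨL0 : ΨL 0 = α) (hΨO0 : ΨO 0 = γ) (hΨR0 : ΨR 0 = β)
    (hΨLp : ∀ x : ℤ, 1 ≤ x →
      ΨL x = (lam * Complex.exp (-(Complex.I * (σp : ℂ)))) ^ x * α)
    (hΨOp : ∀ x : ℤ, 1 ≤ x → ΨO x = 0)
    (hΨRp : ∀ x : ℤ, 1 ≤ x →
      ΨR x = lam⁻¹ * (g * α + h * γ + i * β) * (lam⁻¹ * Δp) ^ (x - 1))
    (hΨLm : ∀ x : ℤ, x ≤ -1 →
      ΨL x = lam⁻¹ * (a * α + b * γ + c * β)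
              * (lam⁻¹ * Complex.exp (Complex.I * (σm : ℂ))) ^ (-x - 1))
    (hΨOm : ∀ x : ℤ, x ≤ -1 → ΨO x = 0)
    (hΨRm : ∀ x : ℤ, x ≤ -1 → ΨR x = (lam * Δm⁻¹) ^ (-x) * β) :
    (∀ x : ℤ, 0 ≤ x →
      lam * ΨL x = Complex.exp (Complex.I * (σp : ℂ)) * ΨL (x + 1)) ∧
    (∀ x : ℤ, x ≤ -2 →
      lam * ΨL x = Complex.exp (Complex.I * (σm : ℂ)) * ΨL (x + 1)) ∧
    (lam * ΨL (-1) = a * ΨL 0 + b * ΨO 0 + c * ΨR 0) ∧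
    (∀ x : ℤ, 1 ≤ x →
      lam * ΨO x = Complex.exp (-(Complex.I * (σp : ℂ))) * ΨO x) ∧
    (∀ x : ℤ, x ≤ -1 →
      lam * ΨO x = Complex.exp (-(Complex.I * (σm : ℂ))) * ΨO x) ∧
    (lam * ΨO 0 = d * ΨL 0 + e * ΨO 0 + f * ΨR 0) ∧
    (∀ x : ℤ, 2 ≤ x → lam * ΨR x = Δp * ΨR (x - 1)) ∧
    (∀ x : ℤ, x ≤ 0 → lam * ΨR x = Δm * ΨR (x - 1)) ∧
    (lam * ΨR 1 = g * ΨL 0 + h * ΨO 0 + i * ΨR 0) := by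
  have hΔp0 : Δp ≠ 0 := fun h => by simp [h] at hΔp
  have hΔm0 : Δm ≠ 0 := fun h => by simp [h] at hΔm
  have hem : Complex.exp (Complex.I * (σm : ℂ)) ≠ 0 := Complex.exp_ne_zero _
  have hepn : Complex.exp (-(Complex.I * (σp : ℂ))) ≠ 0 := Complex.exp_ne_zero _
  have hmul : Complex.exp (Complex.I * (σp : ℂ)) * Complex.exp (-(Complex.I * (σp : ℂ))) = 1 := by
    rw [← Complex.exp_add]; simp
  have hl : lam * lam⁻¹ = 1 := mul_inv_cancel₀ hlam0
  have hdm : Δm * Δm⁻¹ = 1 := mul_inv_cancel₀ hΔm0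
  refine ⟨?_, ?_, ?_, ?_, ?_, ?_, ?_, ?_, ?_⟩
  · intro x hx
    rcases eq_or_lt_of_le hx with h0 | h1
    · subst h0
      rw [hΨL0, show ((0:ℤ)+1) = 1 by norm_num, hΨLp 1 le_rfl, zpow_one]
      linear_combination (-(lam * α)) * hmul
    · have h1' : (1:ℤ) ≤ x := h1
      rw [hΨLp x h1', hΨLp (x+1) (by omega),
        show (x+1 : ℤ) = 1 + x by ring, zpow_add₀ (mul_ne_zero hlam0 hepn), zpow_one]
      generalize (lam * Complex.exp (-(Complex.I * (σp:ℂ)))) ^ x = t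
      linear_combination (-(lam * t * α)) * hmul
  · intro x hx
    rw [hΨLm x (by omega), hΨLm (x+1) (by omega),
      show (-x-1 : ℤ) = 1 + (-(x+1)-1) by ring,
      zpow_add₀ (mul_ne_zero (inv_ne_zero hlam0) hem), zpow_one]
    generalize (lam⁻¹ * Complex.exp (Complex.I * (σm:ℂ))) ^ (-(x+1)-1) = t
    linear_combination (Complex.exp (Complex.I * (σm:ℂ)) * lam⁻¹ * (a * α + b * γ + c * β) * t) * hl
  · rw [hΨLm (-1) le_rfl, hΨL0, hΨO0, hΨR0,
      show (-(-1:ℤ)-1) = 0 by norm_num, zpow_zero]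
    linear_combination (a * α + b * γ + c * β) * hl
  · intro x hx; rw [hΨOp x hx]; ring
  · intro x hx; rw [hΨOm x hx]; ring
  · rw [hΨL0, hΨO0, hΨR0]; exact hγcond
  · intro x hx
    rw [hΨRp x (by omega), hΨRp (x-1) (by omega),
      show (x-1-1 : ℤ) = x-2 by ring, show (x-1 : ℤ) = 1 + (x-2) by ring,
      zpow_add₀ (mul_ne_zero (inv_ne_zero hlam0) hΔp0), zpow_one]
    generalize (lam⁻¹ * Δp) ^ (x-2) = t
    linear_combination (Δp * lam⁻¹ * (g * α + h * γ + i * β) * t) * hl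
  · intro x hx
    rcases eq_or_lt_of_le hx with h0 | h1
    · subst h0
      rw [hΨR0, show ((0:ℤ)-1) = -1 by norm_num, hΨRm (-1) le_rfl,
        show (-(-1:ℤ)) = 1 by norm_num, zpow_one]
      linear_combination (-(lam * β)) * hdm
    · have hx' : x ≤ -1 := by omega
      rw [hΨRm x hx', hΨRm (x-1) (by omega),
        show (-(x-1) : ℤ) = 1 + (-x) by ring,
        zpow_add₀ (mul_ne_zero hlam0 (inv_ne_zero hΔm0)), zpow_one]
      generalize (lam * Δm⁻¹) ^ (-x) = t
      linear_combination (-(lam * t * β)) * hdm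
  · rw [hΨRp 1 le_rfl, hΨL0, hΨO0, hΨR0,
      show ((1:ℤ)-1) = 0 by norm_num, zpow_zero]
    linear_combination (g * α + h * γ + i * β) * hl
end

section
/- Let λ ∈ ℂ with |λ| = 1, λ ≠ e^{−iσ₊}, λ ≠ e^{−iσ₋} and λ ≠ e (the middle diagonal entry of the defect coin), and suppose the defect coin U₀ = [[a,b,c],[d,e,f],[g,h,i]] is also diagonal, i.e., b = c = d = f = g = h = 0 (so |a| = |e| = |i| = 1). Then for any eigenvector Ψ^L, Ψ^O, Ψ^R : ℤ → ℂ of the 3-state diagonal quantum walk with one defect with eigenvalue λ, the measure μ(x) = |Ψ^L(x)|² + |Ψ^O(x)|² + |Ψ^R(x)|² is uniform: μ(x) = |Ψ^L(0)|² + |Ψ^R(0)|² for all x ∈ ℤ. -/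
private lemma const_of_step (F : ℤ → ℝ) (h : ∀ x : ℤ, F (x + 1) = F x) :
    ∀ x : ℤ, F x = F 0 := by
  intro x
  induction x using Int.induction_on with
  | zero => rfl
  | succ n ih => rw [h, ih]
  | pred n ih =>
      have h2 := h (-(n : ℤ) - 1)
      have : (-(n : ℤ) - 1 + 1) = -(n : ℤ) := by ring
      rw [this] at h2
      rw [← h2, ih]

private lemma eq_zero_of_ne (lam c u : ℂ) (h : lam * u = c * u) (hne : lam ≠ c) : u = 0 := by
  have : (lam - c) * u = 0 := by ring_nf; linear_combination h
  rcases mul_eq_zero.1 this with h' | h'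
  · exact absurd (sub_eq_zero.1 h') hne
  · exact h'

/-- If the defect coin of the 3-state diagonal QW is itself diagonal and λ avoids
e^{−iσ₊}, e^{−iσ₋} and the middle diagonal entry e, the stationary measure is uniform. -/
theorem three_state_diagonal_defect_uniform_of_diagonal_defect
    (σp σm : ℝ) (Δp Δm a b c d e f g h i : ℂ)
    (hΔp : ‖Δp‖ = 1) (hΔm : ‖Δm‖ = 1)
    (hU0 : !![a, b, c; d, e, f; g, h, i] ∈ Matrix.unitaryGroup (Fin 3) ℂ)
    (hb : b = 0) (hcz : c = 0) (hdz : d = 0) (hfz : f = 0) (hgz : g = 0) (hhz : h = 0)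
    (lam : ℂ) (hlam : ‖lam‖ = 1)
    (hlamp : lam ≠ Complex.exp (-(Complex.I * (σp : ℂ))))
    (hlamm : lam ≠ Complex.exp (-(Complex.I * (σm : ℂ))))
    (hlame : lam ≠ e)
    (ΨL ΨO ΨR : ℤ → ℂ)
    (hL1 : ∀ x : ℤ, 0 ≤ x →
      lam * ΨL x = Complex.exp (Complex.I * (σp : ℂ)) * ΨL (x + 1))
    (hL2 : ∀ x : ℤ, x ≤ -2 →
      lam * ΨL x = Complex.exp (Complex.I * (σm : ℂ)) * ΨL (x + 1))
    (hL3 : lam * ΨL (-1) = a * ΨL 0 + b * ΨO 0 + c * ΨR 0)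
    (hO1 : ∀ x : ℤ, 1 ≤ x →
      lam * ΨO x = Complex.exp (-(Complex.I * (σp : ℂ))) * ΨO x)
    (hO2 : ∀ x : ℤ, x ≤ -1 →
      lam * ΨO x = Complex.exp (-(Complex.I * (σm : ℂ))) * ΨO x)
    (hO3 : lam * ΨO 0 = d * ΨL 0 + e * ΨO 0 + f * ΨR 0)
    (hR1 : ∀ x : ℤ, 2 ≤ x → lam * ΨR x = Δp * ΨR (x - 1))
    (hR2 : ∀ x : ℤ, x ≤ 0 → lam * ΨR x = Δm * ΨR (x - 1))
    (hR3 : lam * ΨR 1 = g * ΨL 0 + h * ΨO 0 + i * ΨR 0)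
    (μ : ℤ → ℝ)
    (hμ : ∀ x : ℤ, μ x = ‖ΨL x‖ ^ 2 + ‖ΨO x‖ ^ 2
                          + ‖ΨR x‖ ^ 2) :
    ∀ x : ℤ, μ x = ‖ΨL 0‖ ^ 2 + ‖ΨR 0‖ ^ 2 := by
  subst hb hcz hdz hfz hgz hhz
  -- unitarity gives |a| = |i| = 1
  have h1 := hU0.1
  have h00 := congrFun (congrFun h1 0) 0
  have h22 := congrFun (congrFun h1 2) 2
  simp [Matrix.mul_apply, Fin.sum_univ_three, Matrix.one_apply, Matrix.star_apply,
    Matrix.conjTranspose_apply, mul_comm, Complex.mul_conj, Matrix.vecHead,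
    Matrix.vecTail] at h00 h22
  have ha : ‖a‖ = 1 := by
    have : Complex.normSq a = 1 := by exact_mod_cast h00
    rw [← Complex.sq_norm] at this
    nlinarith [norm_nonneg a]
  have hi : ‖i‖ = 1 := by
    have : Complex.normSq i = 1 := by exact_mod_cast h22
    rw [← Complex.sq_norm] at this
    nlinarith [norm_nonneg i]
  have hexp : ∀ s : ℝ, ‖Complex.exp (Complex.I * (s : ℂ))‖ = 1 := by
    intro s; rw [mul_comm]; exact Complex.norm_exp_ofReal_mul_I s
  -- ΨO vanishes everywhere
  have hO : ∀ x : ℤ, ΨO x = 0 := by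
    intro x
    rcases lt_trichotomy x 0 with hx | hx | hx
    · exact eq_zero_of_ne lam _ _ (hO2 x (by omega)) hlamm
    · subst hx
      refine eq_zero_of_ne lam e _ ?_ hlame
      simpa using hO3
    · exact eq_zero_of_ne lam _ _ (hO1 x (by omega)) hlamp
  -- |ΨL| is constant
  have stepL : ∀ x : ℤ, ‖ΨL (x + 1)‖ = ‖ΨL x‖ := by
    intro x
    rcases lt_trichotomy x (-1) with hx | hx | hx
    · have := congrArg (fun z : ℂ => ‖z‖) (hL2 x (by omega))
      simpa [norm_mul, hlam, hexp] using this.symm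
    · subst hx
      have := congrArg (fun z : ℂ => ‖z‖) hL3
      simp only [norm_mul, hlam, one_mul, ha, zero_mul, add_zero, mul_zero] at this
      simpa using this.symm
    · have := congrArg (fun z : ℂ => ‖z‖) (hL1 x (by omega))
      simpa [norm_mul, hlam, hexp] using this.symm
  -- |ΨR| is constant
  have stepR : ∀ x : ℤ, ‖ΨR (x + 1)‖ = ‖ΨR x‖ := by
    intro x
    rcases lt_trichotomy x 0 with hx | hx | hx
    · have := congrArg (fun z : ℂ => ‖z‖) (hR2 (x + 1) (by omega))
      simp only [norm_mul, hlam, one_mul, hΔm, add_sub_cancel_right] at this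
      simpa using this
    · subst hx
      have := congrArg (fun z : ℂ => ‖z‖) hR3
      simp only [norm_mul, hlam, one_mul, hi, zero_mul, zero_add, mul_zero] at this
      simpa using this
    · have := congrArg (fun z : ℂ => ‖z‖) (hR1 (x + 1) (by omega))
      simp only [norm_mul, hlam, one_mul, hΔp, add_sub_cancel_right] at this
      simpa using this
  have hLc := const_of_step (fun x => ‖ΨL x‖) stepL
  have hRc := const_of_step (fun x => ‖ΨR x‖) stepR
  intro x
  rw [hμ x, hO x, show ‖ΨL x‖ = ‖ΨL 0‖ from hLc x,
    show ‖ΨR x‖ = ‖ΨR 0‖ from hRc x]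
  simp
end

section
/- Let λ ∈ ℂ with |λ| = 1 and λ ≠ e^{−iσ}, and let Ψ^L, Ψ^O, Ψ^R : ℤ → ℂ be an eigenvector of the 3-state homogeneous diagonal quantum walk with eigenvalue λ, with α = Ψ^L(0), β = Ψ^R(0). Then Ψ^O(x) = 0 for all x ∈ ℤ, the amplitudes are given explicitly by Ψ^L(x) = (λ·e^{−iσ})^x·α and Ψ^R(x) = (Δ·λ⁻¹)^x·β for all x ∈ ℤ, and consequently the measure μ(x) = |Ψ^L(x)|² + |Ψ^O(x)|² + |Ψ^R(x)|² is uniform: μ(x) = |α|² + |β|² for all x ∈ ℤ. -/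
lemma geom_int (c : ℂ) (hc : c ≠ 0) (f : ℤ → ℂ)
    (hf : ∀ x : ℤ, f (x + 1) = c * f x) : ∀ x : ℤ, f x = c ^ x * f 0 := by
  intro x
  induction x using Int.induction_on with
  | zero => simp
  | succ n ih => rw [hf, ih, zpow_add_one₀ hc]; ring
  | pred n ih =>
    have key : c * f (-(n:ℤ) - 1) = c * (c ^ (-(n:ℤ) - 1) * f 0) := by
      rw [← hf, show (-(n:ℤ) - 1 + 1 : ℤ) = -(n:ℤ) by ring, ih,
        show (-(n:ℤ) : ℤ) = (-(n:ℤ) - 1) + 1 by ring, zpow_add_one₀ hc]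
      ring
    have h2 := mul_left_cancel₀ hc key
    exact h2

/-- For the 3-state homogeneous diagonal QW with λ ≠ e^{−iσ}, the non-moving component
of an eigenvector vanishes everywhere, the amplitudes are explicit geometric sequences,
and the stationary measure is uniform. -/
theorem three_state_homogeneous_diagonal_uniform
    (σ : ℝ) (Δ : ℂ) (hΔ : ‖Δ‖ = 1)
    (lam : ℂ) (hlam : ‖lam‖ = 1)
    (hlamσ : lam ≠ Complex.exp (-(Complex.I * (σ : ℂ))))
    (ΨL ΨO ΨR : ℤ → ℂ)
    (hL : ∀ x : ℤ, lam * ΨL x = Complex.exp (Complex.I * (σ : ℂ)) * ΨL (x + 1))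
    (hO : ∀ x : ℤ, lam * ΨO x = Complex.exp (-(Complex.I * (σ : ℂ))) * ΨO x)
    (hR : ∀ x : ℤ, lam * ΨR x = Δ * ΨR (x - 1))
    (α β : ℂ) (hα : α = ΨL 0) (hβ : β = ΨR 0)
    (μ : ℤ → ℝ)
    (hμ : ∀ x : ℤ, μ x = ‖ΨL x‖ ^ 2 + ‖ΨO x‖ ^ 2
                          + ‖ΨR x‖ ^ 2) :
    (∀ x : ℤ, ΨO x = 0) ∧
    (∀ x : ℤ, ΨL x = (lam * Complex.exp (-(Complex.I * (σ : ℂ)))) ^ x * α) ∧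
    (∀ x : ℤ, ΨR x = (Δ * lam⁻¹) ^ x * β) ∧
    (∀ x : ℤ, μ x = ‖α‖ ^ 2 + ‖β‖ ^ 2) := by
  have hlam0 : lam ≠ 0 := by
    intro h; rw [h] at hlam; simp at hlam
  have hΔ0 : Δ ≠ 0 := by
    intro h; rw [h] at hΔ; simp at hΔ
  set c := lam * Complex.exp (-(Complex.I * (σ : ℂ))) with hc
  have hc0 : c ≠ 0 := mul_ne_zero hlam0 (Complex.exp_ne_zero _)
  have hexpinv : Complex.exp (-(Complex.I * (σ : ℂ))) =
      (Complex.exp (Complex.I * (σ : ℂ)))⁻¹ := by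
    rw [← Complex.exp_neg]
  -- ΨO vanishes
  have hOz : ∀ x : ℤ, ΨO x = 0 := by
    intro x
    have h := hO x
    have hne : lam - Complex.exp (-(Complex.I * (σ : ℂ))) ≠ 0 := sub_ne_zero.mpr hlamσ
    have h2 : (lam - Complex.exp (-(Complex.I * (σ : ℂ)))) * ΨO x = 0 := by
      linear_combination h
    exact (mul_eq_zero.mp h2).resolve_left hne
  -- ΨL formula
  have hLstep : ∀ x : ℤ, ΨL (x + 1) = c * ΨL x := by
    intro x
    have h := hL x
    rw [hc, hexpinv]
    apply mul_left_cancel₀ (Complex.exp_ne_zero (Complex.I * (σ : ℂ)))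
    rw [← h]
    field_simp
  have hLz : ∀ x : ℤ, ΨL x = c ^ x * α := by
    intro x
    rw [hα]
    exact geom_int c hc0 ΨL hLstep x
  -- ΨR formula
  set d := Δ * lam⁻¹ with hd
  have hd0 : d ≠ 0 := mul_ne_zero hΔ0 (inv_ne_zero hlam0)
  have hRstep : ∀ x : ℤ, ΨR (x + 1) = d * ΨR x := by
    intro x
    have h := hR (x + 1)
    rw [show (x + 1 - 1 : ℤ) = x by ring] at h
    rw [hd]
    field_simp
    linear_combination h
  have hRz : ∀ x : ℤ, ΨR x = d ^ x * β := by
    intro x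
    rw [hβ]
    exact geom_int d hd0 ΨR hRstep x
  refine ⟨hOz, hLz, hRz, ?_⟩
  -- uniform measure
  have habs_c : ‖c‖ = 1 := by
    rw [hc, norm_mul, hlam, Complex.norm_exp]
    simp
  have habs_d : ‖d‖ = 1 := by
    rw [hd, norm_mul, hΔ, norm_inv, hlam]
    simp
  intro x
  rw [hμ, hLz, hRz, hOz]
  rw [norm_mul, norm_mul, norm_zpow, norm_zpow, habs_c, habs_d]
  simp
end
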